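/- arXiv:1403.7506 — 4 statements merged into one kernel-verified Lean document; each statement's English description precedes it below -/
import Mathlib

section
/- Let n ≥ 3 and m ≥ 1 be integers. For integers n' ≥ 1, m' ≥ 0 and any integer ℓ, let α_{n',m',ℓ} denote the number of involutions in Sym(n') whose disjoint cycle decomposition contains exactly m' transpositions (2-cycles) and whose length (number of inversions) is ℓ; in particular α_{n',0,0} = 1, α_{n',0,ℓ} = 0 for ℓ ≠ 0, and α_{n',m',ℓ} = 0 for ℓ < 0. Then: (i) if ℓ < m then α_{n,m,ℓ} = 0; and (ii) for every ℓ ≥ m, α_{n,m,ℓ} = α_{n-1,m,ℓ} + Σ_{k=1}^{n-1} α_{n-2,m-1,ℓ+1-2k}. -/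
open Equiv Polynomial

/-- The number of inversions (= Coxeter length) of a permutation of `{1,…,n}`. -/
def invCount (n : ℕ) (w : Equiv.Perm (Fin n)) : ℕ :=
  (Finset.univ.filter fun p : Fin n × Fin n => p.1 < p.2 ∧ w p.2 < w p.1).card

/-- The number of transpositions in the disjoint cycle decomposition of an involution. -/
def numTransA (n : ℕ) (w : Equiv.Perm (Fin n)) : ℕ :=
  ((Finset.univ.filter fun i => w i ≠ i).card) / 2

/-- `α_{n,m,ℓ}`: the number of involutions of `Sym(n)` with `m` transpositions and `ℓ`
inversions (indices `m`, `ℓ` range over `ℤ`, so that it vanishes for negative indices). -/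
noncomputable def alphaCount (n : ℕ) (m ℓ : ℤ) : ℕ :=
  {w : Equiv.Perm (Fin n) | w * w = 1 ∧ (numTransA n w : ℤ) = m ∧
    (invCount n w : ℤ) = ℓ}.ncard

namespace InvolRec

open Finset

lemma alpha_eq_card (n : ℕ) (m ℓ : ℤ) :
    alphaCount n m ℓ = (Finset.univ.filter fun w : Equiv.Perm (Fin n) =>
      w * w = 1 ∧ (numTransA n w : ℤ) = m ∧ (invCount n w : ℤ) = ℓ).card := by
  rw [alphaCount, ← Set.ncard_coe_finset]
  congr 1
  ext w
  simp

lemma invol_apply {n : ℕ} {w : Perm (Fin n)} (h : w * w = 1) (x : Fin n) :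
    w (w x) = x := by
  have := Equiv.ext_iff.mp h x
  simpa [Perm.mul_apply] using this

lemma numTrans_le_inv {n : ℕ} {w : Perm (Fin n)} (h : w * w = 1) :
    numTransA n w ≤ invCount n w := by
  classical
  set A : Finset (Fin n) := univ.filter fun a => a < w a with hA
  set B : Finset (Fin n) := univ.filter fun a => w a < a with hB
  have hAB : (univ.filter fun i => w i ≠ i) = A ∪ B := by
    ext a
    simp only [mem_filter, mem_univ, true_and, mem_union, hA, hB]
    constructor
    · intro hne
      rcases lt_or_gt_of_ne (Ne.symm hne) with h1 | h1
      · exact Or.inl h1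
      · exact Or.inr h1
    · rintro (h1 | h1) <;> exact fun he => by simp [he] at h1 ⊢ <;> omega
  have hdisj : Disjoint A B := by
    rw [Finset.disjoint_left]
    intro a ha hb
    simp only [hA, hB, mem_filter] at ha hb
    exact absurd (ha.2.trans hb.2) (lt_irrefl a)
  have hcardAB : B.card = A.card := by
    apply Finset.card_bij (fun a _ => w a)
    · intro a ha
      simp only [hB, mem_filter, mem_univ, true_and] at ha
      simp only [hA, mem_filter, mem_univ, true_and]
      rwa [invol_apply h]
    · intro a₁ _ a₂ _ hee
      exact w.injective hee
    · intro b hb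
      simp only [hA, mem_filter, mem_univ, true_and] at hb
      refine ⟨w b, ?_, invol_apply h b⟩
      simp only [hB, mem_filter, mem_univ, true_and]
      rwa [invol_apply h]
  have hAle : A.card ≤ invCount n w := by
    rw [invCount]
    apply Finset.card_le_card_of_injOn (fun a => (a, w a))
    · intro a ha
      simp only [hA, Finset.mem_coe, mem_filter, mem_univ, true_and] at ha
      simp only [Finset.mem_coe, mem_filter, mem_univ, true_and]
      exact ⟨ha, by rwa [invol_apply h]⟩
    · intro a _ b _ hab
      exact congrArg Prod.fst hab
  have : numTransA n w = A.card := by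
    rw [numTransA, hAB, Finset.card_union_of_disjoint hdisj, hcardAB]
    omega
  omega

variable {N : ℕ}

/-- Extend a permutation of `Fin N` to `Fin (N+1)` fixing `p`, acting via `succAbove`. -/
def extP (p : Fin (N + 1)) (u : Perm (Fin N)) : Perm (Fin (N + 1)) :=
  ((finSuccEquiv' p).symm).permCongr u.optionCongr

lemma extP_self (p : Fin (N + 1)) (u : Perm (Fin N)) : extP p u p = p := by
  simp [extP, Equiv.permCongr_apply]

lemma extP_succAbove (p : Fin (N + 1)) (u : Perm (Fin N)) (i : Fin N) :
    extP p u (p.succAbove i) = p.succAbove (u i) := by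
  simp [extP, Equiv.permCongr_apply, finSuccEquiv'_succAbove, finSuccEquiv'_symm_some]

lemma eq_self_or_succAbove (p x : Fin (N + 1)) : x = p ∨ ∃ i, x = p.succAbove i := by
  rcases eq_or_ne x p with h | h
  · exact Or.inl h
  · obtain ⟨i, hi⟩ := Fin.exists_succAbove_eq h
    exact Or.inr ⟨i, hi.symm⟩

/-- Restrict a permutation fixing `p` to a permutation of `Fin N`. -/
def restrP (p : Fin (N + 1)) (w : Perm (Fin (N + 1))) : Perm (Fin N) :=
  Equiv.removeNone ((finSuccEquiv' p).permCongr w)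

lemma restrP_spec (p : Fin (N + 1)) {w : Perm (Fin (N + 1))} (h : w p = p) (i : Fin N) :
    w (p.succAbove i) = p.succAbove (restrP p w i) := by
  set g := (finSuccEquiv' p).permCongr w with hg
  have hnone : g none = none := by
    simp [hg, Equiv.permCongr_apply, finSuccEquiv'_symm_none, h, finSuccEquiv'_at]
  have hsome : ∃ x', g (some i) = some x' := by
    cases hc : g (some i) with
    | none => exact absurd (g.injective (hc.trans hnone.symm)) (by simp)
    | some x' => exact ⟨x', rfl⟩
  have hkey := Equiv.removeNone_some g hsome
  rw [hg, Equiv.permCongr_apply, finSuccEquiv'_symm_some] at hkey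
  have h2 := congrArg (finSuccEquiv' p).symm hkey
  rw [Equiv.symm_apply_apply, finSuccEquiv'_symm_some] at h2
  exact h2.symm

lemma extP_restrP (p : Fin (N + 1)) {w : Perm (Fin (N + 1))} (h : w p = p) :
    extP p (restrP p w) = w := by
  ext x
  rcases eq_self_or_succAbove p x with rfl | ⟨i, rfl⟩
  · rw [extP_self, h]
  · rw [extP_succAbove, restrP_spec p h]

lemma extP_invol (p : Fin (N + 1)) (u : Perm (Fin N)) :
    extP p u * extP p u = 1 ↔ u * u = 1 := by
  constructor
  · intro h
    ext i
    have := invol_apply h (p.succAbove i)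
    rw [extP_succAbove, extP_succAbove] at this
    have h2 : u (u i) = i := Fin.succAbove_right_injective this
    simp [Perm.mul_apply, Perm.one_apply, h2]
  · intro h
    ext x
    rcases eq_self_or_succAbove p x with rfl | ⟨i, rfl⟩
    · simp [Perm.mul_apply, extP_self]
    · simp [Perm.mul_apply, extP_succAbove, invol_apply h]

lemma card_moved_extP (p : Fin (N + 1)) (u : Perm (Fin N)) :
    (univ.filter fun x => extP p u x ≠ x).card = (univ.filter fun i => u i ≠ i).card := by
  symm
  apply Finset.card_bij (fun i _ => p.succAbove i)
  · intro i hi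
    simp only [mem_filter, mem_univ, true_and] at hi ⊢
    rw [extP_succAbove]
    exact fun he => hi (Fin.succAbove_right_injective he)
  · intro a₁ _ a₂ _ hee
    exact Fin.succAbove_right_injective hee
  · intro x hx
    simp only [mem_filter, mem_univ, true_and] at hx
    rcases eq_self_or_succAbove p x with rfl | ⟨i, rfl⟩
    · exact absurd (extP_self _ u) hx
    · refine ⟨i, ?_, rfl⟩
      simp only [mem_filter, mem_univ, true_and]
      intro he
      rw [extP_succAbove, he] at hx
      exact hx rfl

lemma numTrans_extP (p : Fin (N + 1)) (u : Perm (Fin N)) :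
    numTransA (N + 1) (extP p u) = numTransA N u := by
  rw [numTransA, numTransA, card_moved_extP]

lemma extP_last_castSucc (u : Perm (Fin N)) (x : Fin N) :
    extP (Fin.last N) u x.castSucc = (u x).castSucc := by
  have h := Fin.succAbove_last (n := N)
  rw [← congrFun h x, ← congrFun h (u x), extP_succAbove]

lemma extP_last_last (u : Perm (Fin N)) : extP (Fin.last N) u (Fin.last N) = Fin.last N :=
  extP_self _ u

lemma invCount_extP_last (u : Perm (Fin N)) :
    invCount (N + 1) (extP (Fin.last N) u) = invCount N u := by
  rw [invCount, invCount]
  symm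
  apply Finset.card_bij (fun q _ => (Fin.castSucc q.1, Fin.castSucc q.2))
  · intro q hq
    simp only [mem_filter, mem_univ, true_and] at hq ⊢
    refine ⟨Fin.castSucc_lt_castSucc_iff.mpr hq.1, ?_⟩
    rw [extP_last_castSucc, extP_last_castSucc]
    exact Fin.castSucc_lt_castSucc_iff.mpr hq.2
  · intro q₁ _ q₂ _ hee
    have h1 := congrArg Prod.fst hee
    have h2 := congrArg Prod.snd hee
    simp only at h1 h2
    exact Prod.ext (Fin.castSucc_injective _ h1) (Fin.castSucc_injective _ h2)
  · intro q hq
    simp only [mem_filter, mem_univ, true_and] at hq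
    have hb : q.2 ≠ Fin.last N := by
      intro he
      rw [he, extP_last_last] at hq
      exact absurd hq.2 (Fin.le_last _).not_gt
    have ha : q.1 ≠ Fin.last N := by
      intro he
      have := hq.1
      rw [he] at this
      exact absurd this (Fin.le_last _).not_gt
    obtain ⟨b', hb'⟩ := Fin.exists_castSucc_eq.mpr hb
    obtain ⟨a', ha'⟩ := Fin.exists_castSucc_eq.mpr ha
    refine ⟨(a', b'), ?_, by simp [ha', hb']⟩
    simp only [mem_filter, mem_univ, true_and]
    constructor
    · rw [← Fin.castSucc_lt_castSucc_iff, ha', hb']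
      exact hq.1
    · rw [← Fin.castSucc_lt_castSucc_iff, ← extP_last_castSucc u, ← extP_last_castSucc u,
        ha', hb']
      exact hq.2

section CaseB

variable {c : ℕ} (j : Fin (c + 2))

/-- The increasing enumeration of the complement of `{j.castSucc, last}` in `Fin (c+3)`. -/
def dmap (i : Fin (c + 1)) : Fin (c + 3) := (j.succAbove i).castSucc

lemma dmap_lt_iff {i i' : Fin (c + 1)} : dmap j i < dmap j i' ↔ i < i' := by
  rw [dmap, dmap, Fin.castSucc_lt_castSucc_iff, Fin.succAbove_lt_succAbove_iff]

lemma dmap_inj : Function.Injective (dmap j) := fun a b h =>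
  Fin.succAbove_right_injective (Fin.castSucc_injective _ h)

lemma dmap_ne_jj (i : Fin (c + 1)) : dmap j i ≠ j.castSucc := fun h =>
  Fin.succAbove_ne j i (Fin.castSucc_injective _ h)

lemma dmap_ne_last (i : Fin (c + 1)) : dmap j i ≠ Fin.last (c + 2) :=
  (Fin.castSucc_lt_last _).ne

lemma dmap_cover {x : Fin (c + 3)} (h1 : x ≠ j.castSucc) (h2 : x ≠ Fin.last (c + 2)) :
    ∃ i, dmap j i = x := by
  obtain ⟨y, hy⟩ := Fin.exists_castSucc_eq.mpr h2
  have hyj : y ≠ j := fun he => h1 (by rw [← hy, he])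
  obtain ⟨i, hi⟩ := Fin.exists_succAbove_eq hyj
  exact ⟨i, by rw [dmap, hi, hy]⟩

variable {w : Perm (Fin (c + 3))} {u : Perm (Fin (c + 1))}

lemma invol_caseB (hjw : w j.castSucc = Fin.last (c + 2))
    (hlw : w (Fin.last (c + 2)) = j.castSucc)
    (hd : ∀ i, w (dmap j i) = dmap j (u i)) :
    w * w = 1 ↔ u * u = 1 := by
  constructor
  · intro h
    ext i
    have := invol_apply h (dmap j i)
    rw [hd, hd] at this
    have h2 : u (u i) = i := dmap_inj j this
    simp [Perm.mul_apply, Perm.one_apply, h2]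
  · intro h
    ext x
    simp only [Perm.mul_apply, Perm.one_apply]
    rcases eq_or_ne x j.castSucc with rfl | h1
    · rw [hjw, hlw]
    rcases eq_or_ne x (Fin.last (c + 2)) with rfl | h2
    · rw [hlw, hjw]
    obtain ⟨i, rfl⟩ := dmap_cover j h1 h2
    rw [hd, hd, invol_apply h]

lemma numTrans_caseB (hjw : w j.castSucc = Fin.last (c + 2))
    (hlw : w (Fin.last (c + 2)) = j.castSucc)
    (hd : ∀ i, w (dmap j i) = dmap j (u i)) :
    numTransA (c + 3) w = numTransA (c + 1) u + 1 := by
  have hjl : (j.castSucc : Fin (c + 3)) ≠ Fin.last (c + 2) := (Fin.castSucc_lt_last _).ne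
  have hsplit := Finset.card_filter_add_card_filter_not
    (s := univ.filter fun x : Fin (c + 3) => w x ≠ x)
    (p := fun x => x ≠ j.castSucc ∧ x ≠ Fin.last (c + 2))
  rw [Finset.filter_filter, Finset.filter_filter] at hsplit
  have e1 : (univ.filter fun x : Fin (c + 3) =>
      w x ≠ x ∧ x ≠ j.castSucc ∧ x ≠ Fin.last (c + 2)).card
      = (univ.filter fun i => u i ≠ i).card := by
    symm
    apply Finset.card_bij (fun i _ => dmap j i)
    · intro i hi
      simp only [mem_filter, mem_univ, true_and] at hi ⊢
      refine ⟨?_, dmap_ne_jj j i, dmap_ne_last j i⟩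
      rw [hd]
      exact fun he => hi (dmap_inj j he)
    · intro a _ b _ h
      exact dmap_inj j h
    · intro x hx
      simp only [mem_filter, mem_univ, true_and] at hx
      obtain ⟨i, rfl⟩ := dmap_cover j hx.2.1 hx.2.2
      refine ⟨i, ?_, rfl⟩
      simp only [mem_filter, mem_univ, true_and]
      intro he
      apply hx.1
      rw [hd, he]
  have e2 : (univ.filter fun x : Fin (c + 3) =>
      w x ≠ x ∧ ¬(x ≠ j.castSucc ∧ x ≠ Fin.last (c + 2))).card = 2 := by
    have heq : (univ.filter fun x : Fin (c + 3) =>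
        w x ≠ x ∧ ¬(x ≠ j.castSucc ∧ x ≠ Fin.last (c + 2)))
        = {j.castSucc, Fin.last (c + 2)} := by
      ext x
      simp only [mem_filter, mem_univ, true_and, mem_insert, mem_singleton, not_and_or, not_not]
      constructor
      · rintro ⟨-, h | h⟩
        · exact Or.inl h
        · exact Or.inr h
      · rintro (rfl | rfl)
        · exact ⟨by rw [hjw]; exact hjl.symm, Or.inl rfl⟩
        · exact ⟨by rw [hlw]; exact hjl, Or.inr rfl⟩
    rw [heq, Finset.card_insert_of_notMem (by simp [hjl]), Finset.card_singleton]
  rw [numTransA, numTransA]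
  omega

lemma invCount_caseB (hjw : w j.castSucc = Fin.last (c + 2))
    (hlw : w (Fin.last (c + 2)) = j.castSucc)
    (hd : ∀ i, w (dmap j i) = dmap j (u i)) :
    invCount (c + 3) w = invCount (c + 1) u + (2 * (c + 1 - (j : ℕ)) + 1) := by
  have hjlt : (j.castSucc : Fin (c + 3)) < Fin.last (c + 2) := Fin.castSucc_lt_last _
  have hsplit := Finset.card_filter_add_card_filter_not
    (s := univ.filter fun q : Fin (c + 3) × Fin (c + 3) => q.1 < q.2 ∧ w q.2 < w q.1)
    (p := fun q => q.1 ≠ j.castSucc ∧ q.2 ≠ j.castSucc ∧ q.2 ≠ Fin.last (c + 2))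
  rw [Finset.filter_filter, Finset.filter_filter] at hsplit
  have e1 : (univ.filter fun q : Fin (c + 3) × Fin (c + 3) =>
      (q.1 < q.2 ∧ w q.2 < w q.1) ∧ q.1 ≠ j.castSucc ∧ q.2 ≠ j.castSucc ∧
        q.2 ≠ Fin.last (c + 2)).card = invCount (c + 1) u := by
    rw [invCount]
    symm
    apply Finset.card_bij (fun q _ => (dmap j q.1, dmap j q.2))
    · intro q hq
      simp only [mem_filter, mem_univ, true_and] at hq ⊢
      refine ⟨⟨(dmap_lt_iff j).mpr hq.1, ?_⟩, dmap_ne_jj j _, dmap_ne_jj j _, dmap_ne_last j _⟩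
      rw [hd, hd]
      exact (dmap_lt_iff j).mpr hq.2
    · intro q₁ _ q₂ _ h
      have h1 := congrArg Prod.fst h
      have h2 := congrArg Prod.snd h
      simp only at h1 h2
      exact Prod.ext (dmap_inj j h1) (dmap_inj j h2)
    · intro q hq
      simp only [mem_filter, mem_univ, true_and] at hq
      obtain ⟨⟨hlt, hinv⟩, h1, h2, h3⟩ := hq
      have h4 : q.1 ≠ Fin.last (c + 2) := by
        intro he
        rw [he] at hlt
        exact absurd hlt (Fin.le_last _).not_gt
      obtain ⟨a, ha⟩ := dmap_cover j h1 h4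
      obtain ⟨b, hb⟩ := dmap_cover j h2 h3
      refine ⟨(a, b), ?_, by simp [ha, hb]⟩
      simp only [mem_filter, mem_univ, true_and]
      constructor
      · rw [← dmap_lt_iff j, ha, hb]
        exact hlt
      · rw [← dmap_lt_iff j, ← hd, ← hd, ha, hb]
        exact hinv
  have e2 : (univ.filter fun q : Fin (c + 3) × Fin (c + 3) =>
      (q.1 < q.2 ∧ w q.2 < w q.1) ∧ ¬(q.1 ≠ j.castSucc ∧ q.2 ≠ j.castSucc ∧
        q.2 ≠ Fin.last (c + 2))).card = (c + 2 - (j : ℕ)) + (c + 1 - (j : ℕ)) := by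
    have heq : (univ.filter fun q : Fin (c + 3) × Fin (c + 3) =>
        (q.1 < q.2 ∧ w q.2 < w q.1) ∧ ¬(q.1 ≠ j.castSucc ∧ q.2 ≠ j.castSucc ∧
          q.2 ≠ Fin.last (c + 2)))
        = (univ.filter fun q : Fin (c + 3) × Fin (c + 3) => q.1 = j.castSucc ∧ q.1 < q.2)
          ∪ (univ.filter fun q : Fin (c + 3) × Fin (c + 3) =>
              q.1 ≠ j.castSucc ∧ q.2 = Fin.last (c + 2) ∧ j.castSucc < w q.1) := by
      ext q
      simp only [mem_filter, mem_univ, true_and, mem_union, not_and_or, not_not]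
      constructor
      · rintro ⟨⟨hlt, hinv⟩, hnq⟩
        by_cases hq1 : q.1 = j.castSucc
        · exact Or.inl ⟨hq1, hlt⟩
        · right
          refine ⟨hq1, ?_⟩
          rcases hnq with h | h | h
          · exact absurd h hq1
          · exfalso
            rw [h, hjw] at hinv
            exact absurd hinv (Fin.le_last _).not_gt
          · rw [h, hlw] at hinv
            exact ⟨h, hinv⟩
      · rintro (⟨h1, h2⟩ | ⟨h1, h2, h3⟩)
        · have hne : q.2 ≠ j.castSucc := by
            rw [h1] at h2
            exact (ne_of_gt h2)
          refine ⟨⟨h2, ?_⟩, Or.inl h1⟩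
          rw [h1, hjw]
          exact lt_of_le_of_ne (Fin.le_last _) fun he => hne (w.injective (he.trans hjw.symm))
        · have hne : q.1 ≠ Fin.last (c + 2) := by
            intro he
            rw [he, hlw] at h3
            exact absurd h3 (lt_irrefl _)
          refine ⟨⟨?_, ?_⟩, Or.inr (Or.inr h2)⟩
          · rw [h2]
            exact lt_of_le_of_ne (Fin.le_last _) hne
          · rw [h2, hlw]
            exact h3
    have hdisj : Disjoint
        (univ.filter fun q : Fin (c + 3) × Fin (c + 3) => q.1 = j.castSucc ∧ q.1 < q.2)
        (univ.filter fun q : Fin (c + 3) × Fin (c + 3) =>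
          q.1 ≠ j.castSucc ∧ q.2 = Fin.last (c + 2) ∧ j.castSucc < w q.1) := by
      rw [Finset.disjoint_left]
      intro q hq1 hq2
      simp only [mem_filter, mem_univ, true_and] at hq1 hq2
      exact hq2.1 hq1.1
    have c1 : (univ.filter fun q : Fin (c + 3) × Fin (c + 3) =>
        q.1 = j.castSucc ∧ q.1 < q.2).card = c + 2 - (j : ℕ) := by
      have : (univ.filter fun q : Fin (c + 3) × Fin (c + 3) =>
          q.1 = j.castSucc ∧ q.1 < q.2).card = (Finset.Ioi (j.castSucc : Fin (c + 3))).card := by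
        apply Finset.card_bij (fun q _ => q.2)
        · intro q hq
          simp only [mem_filter, mem_univ, true_and] at hq
          rw [Finset.mem_Ioi, ← hq.1]
          exact hq.2
        · intro q₁ hq₁ q₂ hq₂ h
          simp only [mem_filter, mem_univ, true_and] at hq₁ hq₂
          exact Prod.ext (hq₁.1.trans hq₂.1.symm) h
        · intro b hb
          rw [Finset.mem_Ioi] at hb
          exact ⟨(j.castSucc, b), by simp [hb], rfl⟩
      rw [this, Fin.card_Ioi]
      simp
    have c2 : (univ.filter fun q : Fin (c + 3) × Fin (c + 3) =>
        q.1 ≠ j.castSucc ∧ q.2 = Fin.last (c + 2) ∧ j.castSucc < w q.1).card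
        = c + 1 - (j : ℕ) := by
      have : (univ.filter fun q : Fin (c + 3) × Fin (c + 3) =>
          q.1 ≠ j.castSucc ∧ q.2 = Fin.last (c + 2) ∧ j.castSucc < w q.1).card
          = (Finset.Ioo (j.castSucc : Fin (c + 3)) (Fin.last (c + 2))).card := by
        symm
        apply Finset.card_bij (fun y _ => (w.symm y, Fin.last (c + 2)))
        · intro y hy
          rw [Finset.mem_Ioo] at hy
          have hne : w.symm y ≠ j.castSucc := by
            intro he
            have hy2 : y = Fin.last (c + 2) := by
              rw [← hjw, ← he, Equiv.apply_symm_apply]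
            exact absurd hy2 hy.2.ne
          have hlt2 : j.castSucc < w (w.symm y) := by
            rw [Equiv.apply_symm_apply]
            exact hy.1
          exact Finset.mem_filter.mpr ⟨Finset.mem_univ _, hne, rfl, hlt2⟩
        · intro y₁ _ y₂ _ h
          have := congrArg Prod.fst h
          simp only at this
          exact w.symm.injective this
        · intro q hq
          simp only [mem_filter, mem_univ, true_and] at hq
          obtain ⟨h1, h2, h3⟩ := hq
          refine ⟨w q.1, ?_, ?_⟩
          · rw [Finset.mem_Ioo]
            refine ⟨h3, lt_of_le_of_ne (Fin.le_last _) fun he => h1 (w.injective (he.trans hjw.symm))⟩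
          · rw [Equiv.symm_apply_apply]
            exact Prod.ext rfl h2.symm
      rw [this, Fin.card_Ioo]
      have := j.isLt
      simp only [Fin.val_last, Fin.coe_castSucc]
      omega
    rw [heq, Finset.card_union_of_disjoint hdisj, c1, c2]
  rw [invCount]
  have hjc : (j : ℕ) < c + 2 := j.isLt
  omega

/-- The permutation of case B: swap `j.castSucc` with `last`, act by `u` elsewhere. -/
def wB (u : Perm (Fin (c + 1))) : Perm (Fin (c + 3)) :=
  Equiv.swap j.castSucc (Fin.last (c + 2)) * extP (Fin.last (c + 2)) (extP j u)

lemma wB_jj (u : Perm (Fin (c + 1))) : wB j u j.castSucc = Fin.last (c + 2) := by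
  rw [wB, Perm.mul_apply, extP_last_castSucc, extP_self, Equiv.swap_apply_left]

lemma wB_last (u : Perm (Fin (c + 1))) : wB j u (Fin.last (c + 2)) = j.castSucc := by
  rw [wB, Perm.mul_apply, extP_last_last, Equiv.swap_apply_right]

lemma wB_dmap (u : Perm (Fin (c + 1))) (i : Fin (c + 1)) :
    wB j u (dmap j i) = dmap j (u i) := by
  rw [wB, Perm.mul_apply, dmap, extP_last_castSucc, extP_succAbove, ← dmap]
  exact Equiv.swap_apply_of_ne_of_ne (dmap_ne_jj j _) (dmap_ne_last j _)

lemma cardB (m ℓ : ℤ) :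
    (univ.filter fun w : Perm (Fin (c + 3)) =>
      (w * w = 1 ∧ (numTransA (c + 3) w : ℤ) = m ∧ (invCount (c + 3) w : ℤ) = ℓ) ∧
        w (Fin.last (c + 2)) = j.castSucc).card
    = (univ.filter fun u : Perm (Fin (c + 1)) =>
        u * u = 1 ∧ (numTransA (c + 1) u : ℤ) = m - 1 ∧
          (invCount (c + 1) u : ℤ) = ℓ + 1 - 2 * ((c : ℤ) + 2 - ((j : ℕ) : ℤ))).card := by
  symm
  have hjle : ((j : ℕ)) ≤ c + 1 := by have := j.isLt; omega
  apply Finset.card_bij (fun u _ => wB j u)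
  · intro u hu
    simp only [mem_filter, mem_univ, true_and] at hu ⊢
    obtain ⟨h1, h2, h3⟩ := hu
    have hinv := (invol_caseB j (wB_jj j u) (wB_last j u) (wB_dmap j u)).mpr h1
    have hnum := numTrans_caseB j (wB_jj j u) (wB_last j u) (wB_dmap j u)
    have hinvc := invCount_caseB j (wB_jj j u) (wB_last j u) (wB_dmap j u)
    refine ⟨⟨hinv, ?_, ?_⟩, wB_last j u⟩
    · rw [hnum]
      omega
    · rw [hinvc]
      omega
  · intro u₁ _ u₂ _ h
    ext i
    have h2 : wB j u₁ (dmap j i) = wB j u₂ (dmap j i) := by rw [h]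
    rw [wB_dmap, wB_dmap] at h2
    have := dmap_inj j h2
    simp [this]
  · intro w hw
    simp only [mem_filter, mem_univ, true_and] at hw
    obtain ⟨⟨h1, h2, h3⟩, h4⟩ := hw
    have hwjj : w j.castSucc = Fin.last (c + 2) := by
      conv_lhs => rw [← h4]
      rw [invol_apply h1]
    set v := Equiv.swap j.castSucc (Fin.last (c + 2)) * w with hv
    have hvlast : v (Fin.last (c + 2)) = Fin.last (c + 2) := by
      rw [hv, Perm.mul_apply, h4, Equiv.swap_apply_left]
    have hveq : extP (Fin.last (c + 2)) (restrP (Fin.last (c + 2)) v) = v :=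
      extP_restrP _ hvlast
    set v' := restrP (Fin.last (c + 2)) v with hv'
    have hv'j : v' j = j := by
      have hs : v ((Fin.last (c + 2)).succAbove j) = (Fin.last (c + 2)).succAbove (v' j) :=
        restrP_spec _ hvlast j
      rw [congrFun Fin.succAbove_last j, congrFun Fin.succAbove_last (v' j)] at hs
      have h5 : v j.castSucc = j.castSucc := by
        rw [hv, Perm.mul_apply, hwjj, Equiv.swap_apply_right]
      exact Fin.castSucc_injective _ (hs.symm.trans h5)
    set u := restrP j v' with hu
    have hueq : extP j u = v' := extP_restrP j hv'j
    have hwB : wB j u = w := by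
      rw [wB, hueq, hv', hveq, hv, ← mul_assoc, Equiv.swap_mul_self, one_mul]
    have hinvu : u * u = 1 :=
      (invol_caseB j (wB_jj j u) (wB_last j u) (wB_dmap j u)).mp (by rw [hwB]; exact h1)
    have hnum := numTrans_caseB j (wB_jj j u) (wB_last j u) (wB_dmap j u)
    have hinvc := invCount_caseB j (wB_jj j u) (wB_last j u) (wB_dmap j u)
    rw [hwB] at hnum hinvc
    refine ⟨u, ?_, hwB⟩
    simp only [mem_filter, mem_univ, true_and]
    refine ⟨hinvu, ?_, ?_⟩
    · omega
    · omega

end CaseB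

lemma cardA {N : ℕ} (m ℓ : ℤ) :
    (univ.filter fun w : Perm (Fin (N + 1)) =>
      (w * w = 1 ∧ (numTransA (N + 1) w : ℤ) = m ∧ (invCount (N + 1) w : ℤ) = ℓ) ∧
        w (Fin.last N) = Fin.last N).card
    = (univ.filter fun u : Perm (Fin N) =>
        u * u = 1 ∧ (numTransA N u : ℤ) = m ∧ (invCount N u : ℤ) = ℓ).card := by
  symm
  apply Finset.card_bij (fun u _ => extP (Fin.last N) u)
  · intro u hu
    simp only [mem_filter, mem_univ, true_and] at hu ⊢
    refine ⟨⟨(extP_invol _ u).mpr hu.1, ?_, ?_⟩, extP_last_last u⟩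
    · rw [numTrans_extP]
      exact hu.2.1
    · rw [invCount_extP_last]
      exact hu.2.2
  · intro u₁ _ u₂ _ h
    ext i
    have h2 : extP (Fin.last N) u₁ i.castSucc = extP (Fin.last N) u₂ i.castSucc := by rw [h]
    rw [extP_last_castSucc, extP_last_castSucc] at h2
    have := Fin.castSucc_injective _ h2
    simp [this]
  · intro w hw
    simp only [mem_filter, mem_univ, true_and] at hw
    obtain ⟨⟨h1, h2, h3⟩, h4⟩ := hw
    have he := extP_restrP (Fin.last N) h4
    refine ⟨restrP (Fin.last N) w, ?_, he⟩
    simp only [mem_filter, mem_univ, true_and]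
    refine ⟨(extP_invol _ _).mp (by rw [he]; exact h1), ?_, ?_⟩
    · rw [← numTrans_extP (Fin.last N), he]
      exact h2
    · rw [← invCount_extP_last, he]
      exact h3

lemma key (c : ℕ) (m ℓ : ℤ) :
    (univ.filter fun w : Perm (Fin (c + 3)) =>
      w * w = 1 ∧ (numTransA (c + 3) w : ℤ) = m ∧ (invCount (c + 3) w : ℤ) = ℓ).card
    = (univ.filter fun u : Perm (Fin (c + 2)) =>
        u * u = 1 ∧ (numTransA (c + 2) u : ℤ) = m ∧ (invCount (c + 2) u : ℤ) = ℓ).card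
      + ∑ k ∈ Finset.Icc (1 : ℤ) ((c : ℤ) + 2),
          (univ.filter fun u : Perm (Fin (c + 1)) =>
            u * u = 1 ∧ (numTransA (c + 1) u : ℤ) = m - 1 ∧
              (invCount (c + 1) u : ℤ) = ℓ + 1 - 2 * k).card := by
  classical
  have hsplit := Finset.card_filter_add_card_filter_not
    (s := univ.filter fun w : Perm (Fin (c + 3)) =>
      w * w = 1 ∧ (numTransA (c + 3) w : ℤ) = m ∧ (invCount (c + 3) w : ℤ) = ℓ)
    (p := fun w => w (Fin.last (c + 2)) = Fin.last (c + 2))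
  rw [Finset.filter_filter, Finset.filter_filter] at hsplit
  rw [← hsplit]
  congr 1
  · exact cardA (N := c + 2) m ℓ
  · -- fibers over the value of `w last`
    have hmem : ∀ w ∈ (univ.filter fun w : Perm (Fin (c + 3)) =>
        (w * w = 1 ∧ (numTransA (c + 3) w : ℤ) = m ∧ (invCount (c + 3) w : ℤ) = ℓ) ∧
          ¬w (Fin.last (c + 2)) = Fin.last (c + 2)),
        (fun w : Perm (Fin (c + 3)) => w (Fin.last (c + 2))) w ∈
          (univ : Finset (Fin (c + 2))).map ⟨Fin.castSucc, Fin.castSucc_injective _⟩ := by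
      intro w hw
      simp only [mem_filter] at hw
      simp only [Finset.mem_map, Finset.mem_univ, Function.Embedding.coeFn_mk]
      obtain ⟨jj, hjj⟩ := Fin.exists_castSucc_eq.mpr hw.2.2
      exact ⟨jj, trivial, hjj⟩
    rw [Finset.card_eq_sum_card_fiberwise hmem, Finset.sum_map]
    have hterm : ∀ j : Fin (c + 2),
          (Finset.filter (fun w => w (Fin.last (c + 2)) = j.castSucc)
            (univ.filter fun w : Perm (Fin (c + 3)) =>
              (w * w = 1 ∧ (numTransA (c + 3) w : ℤ) = m ∧ (invCount (c + 3) w : ℤ) = ℓ) ∧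
                ¬w (Fin.last (c + 2)) = Fin.last (c + 2))).card
          = (univ.filter fun u : Perm (Fin (c + 1)) =>
              u * u = 1 ∧ (numTransA (c + 1) u : ℤ) = m - 1 ∧
                (invCount (c + 1) u : ℤ)
                  = ℓ + 1 - 2 * ((c : ℤ) + 2 - ((j : ℕ) : ℤ))).card := by
        intro j
        rw [Finset.filter_filter, ← cardB j m ℓ]
        congr 1
        apply Finset.filter_congr
        intro w _
        constructor
        · rintro ⟨⟨hc1, -⟩, he⟩
          exact ⟨hc1, he⟩
        · rintro ⟨hc1, he⟩
          refine ⟨⟨hc1, ?_⟩, he⟩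
          rw [he]
          exact (Fin.castSucc_lt_last j).ne
    refine Eq.trans (Finset.sum_congr rfl fun j _ => hterm j) ?_
    refine Finset.sum_bij' (i := fun (j : Fin (c + 2)) _ => (c : ℤ) + 2 - ((j : ℕ) : ℤ))
      (j := fun (k : ℤ) hk => (⟨((c : ℤ) + 2 - k).toNat, by
        simp only [Finset.mem_Icc] at hk
        omega⟩ : Fin (c + 2))) ?_ ?_ ?_ ?_ ?_
    · intro a _
      simp only [Finset.mem_Icc]
      have := a.isLt
      omega
    · intro k hk
      exact Finset.mem_univ _
    · intro a ha
      have := a.isLt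
      apply Fin.ext
      simp only
      omega
    · intro k hk
      simp only [Finset.mem_Icc] at hk
      simp only
      omega
    · intro a _
      rfl

end InvolRec

theorem involution_length_recursion_A (n m : ℕ) (hn : 3 ≤ n) (hm : 1 ≤ m) :
    (∀ ℓ : ℤ, ℓ < (m : ℤ) → alphaCount n m ℓ = 0) ∧
    (∀ ℓ : ℤ, (m : ℤ) ≤ ℓ →
      alphaCount n m ℓ = alphaCount (n - 1) m ℓ +
        ∑ k ∈ Finset.Icc (1 : ℤ) ((n : ℤ) - 1),
          alphaCount (n - 2) ((m : ℤ) - 1) (ℓ + 1 - 2 * k)) := by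
  obtain ⟨c, rfl⟩ : ∃ c, n = c + 3 := ⟨n - 3, by omega⟩
  constructor
  · intro ℓ hℓ
    rw [InvolRec.alpha_eq_card, Finset.card_eq_zero, Finset.filter_eq_empty_iff]
    rintro w - ⟨h1, h2, h3⟩
    have := InvolRec.numTrans_le_inv h1
    omega
  · intro ℓ _
    have hb : ((c + 3 : ℕ) : ℤ) - 1 = (c : ℤ) + 2 := by push_cast; ring
    rw [show c + 3 - 1 = c + 2 from rfl, show c + 3 - 2 = c + 1 from rfl, hb,
      InvolRec.alpha_eq_card, InvolRec.alpha_eq_card]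
    simp only [InvolRec.alpha_eq_card]
    exact InvolRec.key c (m : ℤ) ℓ
end

section
/- For integers n ≥ 1 and m ≥ 0, let L_{n,m}(t) = Σ_ℓ α_{n,m,ℓ} t^ℓ ∈ ℤ[t], where α_{n,m,ℓ} is the number of involutions in Sym(n) with exactly m transpositions in their disjoint cycle decomposition and with ℓ inversions (and α_{n,0,0} = 1). Then L_{n,0}(t) = 1 for all n, L_{1,1}(t) = 0, L_{2,1}(t) = t, L_{n,m}(t) = 0 whenever n < 2m, and for all integers n ≥ 3 and m ≥ 1, L_{n,m}(t) = L_{n-1,m}(t) + (t + t³ + ⋯ + t^{2n-3}) · L_{n-2,m-1}(t). -/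
open Equiv Polynomial

open scoped Classical

/-- `L_{n,m}(t) = Σ_ℓ α_{n,m,ℓ} t^ℓ`: the length generating polynomial of the involutions of
`Sym(n)` having exactly `m` transpositions. -/
noncomputable def LA (n m : ℕ) : Polynomial ℤ :=
  ∑ w ∈ Finset.univ.filter
      (fun w : Equiv.Perm (Fin n) => w * w = 1 ∧ numTransA n w = m),
    (Polynomial.X : Polynomial ℤ) ^ invCount n w

namespace InvolAux

lemma numTransA_eq (n : ℕ) (w : Perm (Fin n)) : numTransA n w = w.support.card / 2 := by
  rfl

lemma invCount_one (n : ℕ) : invCount n 1 = 0 := by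
  unfold invCount
  rw [Finset.card_eq_zero, Finset.filter_eq_empty_iff]
  rintro p -
  simp only [Perm.one_apply, not_and]
  intro h1 h2
  exact absurd (h1.trans h2) (lt_irrefl _)

lemma LA_zero (n : ℕ) : LA n 0 = 1 := by
  unfold LA
  have h : (Finset.univ.filter
      (fun w : Perm (Fin n) => w * w = 1 ∧ numTransA n w = 0)) = {1} := by
    ext w
    simp only [Finset.mem_filter, Finset.mem_univ, true_and, Finset.mem_singleton]
    constructor
    · rintro ⟨-, h2⟩
      rw [numTransA_eq] at h2
      have hlt : w.support.card < 2 := by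
        have := Nat.div_eq_zero_iff.mp h2; omega
      have hne : w.support.card ≠ 1 := w.card_support_ne_one
      have : w.support.card = 0 := by omega
      rwa [Finset.card_eq_zero, Equiv.Perm.support_eq_empty_iff] at this
    · rintro rfl
      refine ⟨one_mul 1, ?_⟩
      rw [numTransA_eq]
      simp
  rw [h, Finset.sum_singleton, invCount_one, pow_zero]

lemma LA_small (n m : ℕ) (h : n < 2 * m) : LA n m = 0 := by
  unfold LA
  have he : (Finset.univ.filter
      (fun w : Perm (Fin n) => w * w = 1 ∧ numTransA n w = m)) = ∅ := by
    rw [Finset.filter_eq_empty_iff]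
    rintro w - ⟨-, h2⟩
    rw [numTransA_eq] at h2
    have h3 : w.support.card ≤ n := by
      simpa using Finset.card_le_univ w.support
    have := Nat.div_mul_le_self w.support.card 2
    omega
  rw [he, Finset.sum_empty]

/-- Generic counting lemma: inversion pairs with both coordinates in the range of a
strictly monotone map `g` compatible with `w`/`u` count the inversions of `u`. -/
lemma card_middle {s t : ℕ} (g : Fin s → Fin t) (hg : StrictMono g)
    (w : Perm (Fin t)) (u : Perm (Fin s)) (hw : ∀ i, w (g i) = g (u i)) :
    (Finset.univ.filter fun p : Fin t × Fin t =>
        (p.1 < p.2 ∧ w p.2 < w p.1) ∧ (∃ i, g i = p.1) ∧ (∃ i, g i = p.2)).card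
      = invCount s u := by
  rw [invCount,
    ← Finset.card_image_of_injective _ (hg.injective.prodMap hg.injective)]
  congr 1
  ext ⟨x, y⟩
  simp only [Finset.mem_image, Finset.mem_filter, Finset.mem_univ, true_and, Prod.exists,
    Prod.map_apply, Prod.mk.injEq]
  constructor
  · rintro ⟨⟨hlt, hinv⟩, ⟨i, rfl⟩, ⟨i', rfl⟩⟩
    refine ⟨i, i', ⟨hg.lt_iff_lt.mp hlt, ?_⟩, rfl, rfl⟩
    rw [hw, hw] at hinv
    exact hg.lt_iff_lt.mp hinv
  · rintro ⟨i, i', ⟨hlt, hinv⟩, rfl, rfl⟩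
    exact ⟨⟨hg hlt, by rw [hw, hw]; exact hg hinv⟩, ⟨i, rfl⟩, ⟨i', rfl⟩⟩

/-- Build an equivalence onto a subtype from an injection whose range is characterized
by a predicate. -/
noncomputable def eqvOf {s t : ℕ} (g : Fin s → Fin t) (hg : Function.Injective g)
    (p : Fin t → Prop) (hp : ∀ x, (∃ i, g i = x) ↔ p x) : Fin s ≃ {x : Fin t // p x} :=
  (Equiv.ofInjective g hg).trans (Equiv.subtypeEquivRight (fun x => hp x))

@[simp] lemma eqvOf_coe {s t : ℕ} (g : Fin s → Fin t) (hg : Function.Injective g)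
    (p : Fin t → Prop) (hp : ∀ x, (∃ i, g i = x) ↔ p x) (i : Fin s) :
    ((eqvOf g hg p hp i : {x : Fin t // p x}) : Fin t) = g i := rfl

section CaseA

variable {b : ℕ}

lemma rangeA (x : Fin (b + 1)) : (∃ i : Fin b, Fin.castSucc i = x) ↔ x ≠ Fin.last b := by
  constructor
  · rintro ⟨i, rfl⟩
    exact Fin.ne_last_of_lt (Fin.castSucc_lt_last i)
  · intro hx
    exact ⟨x.castPred hx, Fin.castSucc_castPred x hx⟩

noncomputable def eqvA (b : ℕ) : Fin b ≃ {x : Fin (b + 1) // x ≠ Fin.last b} :=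
  eqvOf Fin.castSucc (Fin.castSucc_injective b) _ rangeA

noncomputable def extA (u : Perm (Fin b)) : Perm (Fin (b + 1)) := u.extendDomain (eqvA b)

lemma extA_castSucc (u : Perm (Fin b)) (i : Fin b) :
    extA u (Fin.castSucc i) = Fin.castSucc (u i) := by
  have := Equiv.Perm.extendDomain_apply_image u (eqvA b) i
  simpa [extA, eqvA] using this

lemma extA_last (u : Perm (Fin b)) : extA u (Fin.last b) = Fin.last b :=
  Equiv.Perm.extendDomain_apply_not_subtype u (eqvA b) (by simp)

lemma extA_mul (u v : Perm (Fin b)) : extA (u * v) = extA u * extA v := by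
  simp [extA, Equiv.Perm.extendDomain_mul]

lemma extA_inj : Function.Injective (extA (b := b)) :=
  Equiv.Perm.extendDomainHom_injective (eqvA b)

lemma extA_invol {u : Perm (Fin b)} (hu : u * u = 1) : extA u * extA u = 1 := by
  rw [← extA_mul, hu]
  simp [extA]

lemma numTransA_extA (u : Perm (Fin b)) : numTransA (b + 1) (extA u) = numTransA b u := by
  rw [numTransA_eq, numTransA_eq, extA, Equiv.Perm.card_support_extend_domain]

lemma invCount_extA (u : Perm (Fin b)) : invCount (b + 1) (extA u) = invCount b u := by
  rw [invCount, ← card_middle Fin.castSucc Fin.strictMono_castSucc (extA u) u (extA_castSucc u)]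
  congr 1
  ext p
  simp only [Finset.mem_filter, Finset.mem_univ, true_and]
  constructor
  · rintro ⟨h1, h2⟩
    have hq : p.2 ≠ Fin.last b := by
      intro h
      rw [h, extA_last] at h2
      exact absurd h2 (Fin.not_lt.mpr (Fin.le_last _))
    have hp : p.1 ≠ Fin.last b := Fin.ne_last_of_lt (lt_of_lt_of_le h1 (Fin.le_last _))
    exact ⟨⟨h1, h2⟩, (rangeA _).mpr hp, (rangeA _).mpr hq⟩
  · rintro ⟨h, -, -⟩
    exact h


lemma extA_one : extA (1 : Perm (Fin b)) = 1 := Equiv.Perm.extendDomain_one _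

/-- Restriction of a permutation fixing the last element. -/
noncomputable def resA (w : Perm (Fin (b + 1))) (hl : w (Fin.last b) = Fin.last b) :
    Perm (Fin b) :=
  ((eqvA b).symm).permCongr
    (w.subtypePerm (fun x => Iff.symm (not_congr
      ⟨fun h => h ▸ hl, fun h => w.injective (by rw [hl]; exact h)⟩)))

lemma extA_resA (w : Perm (Fin (b + 1))) (hl : w (Fin.last b) = Fin.last b) :
    extA (resA w hl) = w := by
  ext x
  by_cases hx : x = Fin.last b
  · subst hx; rw [extA_last, hl]
  · rw [extA, Equiv.Perm.extendDomain_apply_subtype (resA w hl) (eqvA b) (by exact hx)]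
    simp [resA, Equiv.permCongr_apply, Equiv.Perm.subtypePerm_apply]

lemma sum_fiber_last (b m' : ℕ) :
    ∑ w ∈ (Finset.univ.filter
        (fun w : Perm (Fin (b + 1)) => w * w = 1 ∧ numTransA (b + 1) w = m')).filter
        (fun w => w (Fin.last b) = Fin.last b),
      (Polynomial.X : Polynomial ℤ) ^ invCount (b + 1) w = LA b m' := by
  rw [LA]
  refine Finset.sum_bij' (fun w hw => resA w ?_) (fun u _ => extA u) ?_ ?_ ?_ ?_ ?_
  · simp only [Finset.mem_filter] at hw
    exact hw.2
  · intro w hw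
    simp only [Finset.mem_filter, Finset.mem_univ, true_and] at hw ⊢
    obtain ⟨⟨h1, h2⟩, hl⟩ := hw
    have key := extA_resA w hl
    constructor
    · apply extA_inj
      rw [extA_mul, key, extA_one, h1]
    · rw [← numTransA_extA, key, h2]
  · intro u hu
    simp only [Finset.mem_filter, Finset.mem_univ, true_and] at hu ⊢
    obtain ⟨h1, h2⟩ := hu
    exact ⟨⟨by rw [← extA_mul, h1, extA_one], by rw [numTransA_extA, h2]⟩, extA_last u⟩
  · intro w hw
    simp only [Finset.mem_filter] at hw
    exact extA_resA w hw.2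
  · intro u hu
    apply extA_inj
    exact extA_resA _ (extA_last u)
  · intro w hw
    simp only [Finset.mem_filter] at hw
    conv_rhs => rw [← invCount_extA, extA_resA w hw.2]

end CaseA

section CaseB

variable {a : ℕ}

def embB (j : Fin (a + 1)) : Fin a → Fin (a + 2) := fun i => (j.succAbove i).castSucc

lemma embB_strictMono (j : Fin (a + 1)) : StrictMono (embB j) :=
  fun _ _ h => Fin.strictMono_castSucc (Fin.strictMono_succAbove j h)

lemma rangeB (j : Fin (a + 1)) (x : Fin (a + 2)) :
    (∃ i, embB j i = x) ↔ x ≠ j.castSucc ∧ x ≠ Fin.last (a + 1) := by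
  constructor
  · rintro ⟨i, rfl⟩
    refine ⟨?_, Fin.ne_last_of_lt (Fin.castSucc_lt_last _)⟩
    simp only [embB, Ne, Fin.castSucc_inj]
    exact Fin.succAbove_ne j i
  · rintro ⟨h1, h2⟩
    obtain ⟨y, rfl⟩ := (rangeA x).mpr h2
    have hy : y ≠ j := fun h => h1 (by rw [h])
    obtain ⟨i, hi⟩ := Fin.exists_succAbove_eq hy
    exact ⟨i, by rw [embB, hi]⟩

noncomputable def eqvB (j : Fin (a + 1)) :
    Fin a ≃ {x : Fin (a + 2) // x ≠ j.castSucc ∧ x ≠ Fin.last (a + 1)} :=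
  eqvOf (embB j) (embB_strictMono j).injective _ (rangeB j)

noncomputable def extB (j : Fin (a + 1)) (u : Perm (Fin a)) : Perm (Fin (a + 2)) :=
  u.extendDomain (eqvB j)

noncomputable def PhiB (j : Fin (a + 1)) (u : Perm (Fin a)) : Perm (Fin (a + 2)) :=
  Equiv.swap j.castSucc (Fin.last (a + 1)) * extB j u

lemma hJL (j : Fin (a + 1)) : j.castSucc ≠ Fin.last (a + 1) :=
  Fin.ne_last_of_lt (Fin.castSucc_lt_last j)

lemma extB_emb (j : Fin (a + 1)) (u : Perm (Fin a)) (i : Fin a) :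
    extB j u (embB j i) = embB j (u i) := by
  have := Equiv.Perm.extendDomain_apply_image u (eqvB j) i
  simpa [extB, eqvB] using this

lemma extB_J (j : Fin (a + 1)) (u : Perm (Fin a)) : extB j u j.castSucc = j.castSucc :=
  Equiv.Perm.extendDomain_apply_not_subtype u (eqvB j) (by simp)

lemma extB_L (j : Fin (a + 1)) (u : Perm (Fin a)) :
    extB j u (Fin.last (a + 1)) = Fin.last (a + 1) :=
  Equiv.Perm.extendDomain_apply_not_subtype u (eqvB j) (by simp)

lemma swap_comm_extB (j : Fin (a + 1)) (u : Perm (Fin a)) :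
    Equiv.swap j.castSucc (Fin.last (a + 1)) * extB j u
      = extB j u * Equiv.swap j.castSucc (Fin.last (a + 1)) := by
  have h := Equiv.swap_apply_apply (extB j u) j.castSucc (Fin.last (a + 1))
  rw [extB_J, extB_L] at h
  calc Equiv.swap j.castSucc (Fin.last (a + 1)) * extB j u
      = (extB j u * Equiv.swap j.castSucc (Fin.last (a + 1)) * (extB j u)⁻¹) * extB j u := by
        rw [← h]
    _ = extB j u * Equiv.swap j.castSucc (Fin.last (a + 1)) := by group

lemma PhiB_emb (j : Fin (a + 1)) (u : Perm (Fin a)) (i : Fin a) :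
    PhiB j u (embB j i) = embB j (u i) := by
  have hr := (rangeB j (embB j (u i))).mp ⟨u i, rfl⟩
  rw [PhiB, Equiv.Perm.mul_apply, extB_emb]
  exact Equiv.swap_apply_of_ne_of_ne hr.1 hr.2

lemma PhiB_L (j : Fin (a + 1)) (u : Perm (Fin a)) :
    PhiB j u (Fin.last (a + 1)) = j.castSucc := by
  rw [PhiB, Equiv.Perm.mul_apply, extB_L, Equiv.swap_apply_right]

lemma PhiB_J (j : Fin (a + 1)) (u : Perm (Fin a)) :
    PhiB j u j.castSucc = Fin.last (a + 1) := by
  rw [PhiB, Equiv.Perm.mul_apply, extB_J, Equiv.swap_apply_left]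

lemma PhiB_mul_self (j : Fin (a + 1)) (u : Perm (Fin a)) :
    PhiB j u * PhiB j u = extB j (u * u) := by
  have hc := swap_comm_extB j u
  rw [PhiB]
  calc Equiv.swap j.castSucc (Fin.last (a + 1)) * extB j u
        * (Equiv.swap j.castSucc (Fin.last (a + 1)) * extB j u)
      = Equiv.swap j.castSucc (Fin.last (a + 1))
        * (extB j u * Equiv.swap j.castSucc (Fin.last (a + 1))) * extB j u := by group
    _ = Equiv.swap j.castSucc (Fin.last (a + 1))
        * (Equiv.swap j.castSucc (Fin.last (a + 1)) * extB j u) * extB j u := by rw [← hc]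
    _ = (Equiv.swap j.castSucc (Fin.last (a + 1)) * Equiv.swap j.castSucc (Fin.last (a + 1)))
        * (extB j u * extB j u) := by group
    _ = extB j u * extB j u := by rw [Equiv.swap_mul_self, one_mul]
    _ = extB j (u * u) := by simp [extB, Equiv.Perm.extendDomain_mul]

lemma PhiB_invol_iff (j : Fin (a + 1)) (u : Perm (Fin a)) :
    PhiB j u * PhiB j u = 1 ↔ u * u = 1 := by
  rw [PhiB_mul_self, extB, Equiv.Perm.extendDomain_eq_one_iff]

lemma PhiB_inj (j : Fin (a + 1)) : Function.Injective (PhiB j (a := a)) := by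
  intro u u' h
  rw [PhiB, PhiB] at h
  have h2 : extB j u = extB j u' := mul_left_cancel h
  exact Equiv.Perm.extendDomainHom_injective (eqvB j) h2

lemma numTransA_PhiB (j : Fin (a + 1)) (u : Perm (Fin a)) :
    numTransA (a + 2) (PhiB j u) = numTransA a u + 1 := by
  have hdisj : (Equiv.swap j.castSucc (Fin.last (a + 1))).Disjoint (extB j u) := by
    intro x
    by_cases hx : x ≠ j.castSucc ∧ x ≠ Fin.last (a + 1)
    · exact Or.inl (Equiv.swap_apply_of_ne_of_ne hx.1 hx.2)
    · exact Or.inr (Equiv.Perm.extendDomain_apply_not_subtype u (eqvB j) hx)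
  rw [numTransA_eq, numTransA_eq, PhiB, hdisj.card_support_mul,
    Equiv.Perm.card_support_swap (hJL j), extB, Equiv.Perm.card_support_extend_domain]
  omega

lemma invCount_PhiB (j : Fin (a + 1)) (u : Perm (Fin a)) (hu : u * u = 1) :
    invCount (a + 2) (PhiB j u) = invCount a u + (2 * (a - j) + 1) := by
  set JJ := j.castSucc with hJJ
  set LL := Fin.last (a + 1) with hLL
  set w := PhiB j u with hwdef
  have h1 : w * w = 1 := (PhiB_invol_iff j u).mpr hu
  have hww : ∀ x, w (w x) = x := fun x => by
    rw [← Equiv.Perm.mul_apply, h1, Equiv.Perm.one_apply]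
  have hwL : w LL = JJ := PhiB_L j u
  have hwJ : w JJ = LL := PhiB_J j u
  have hja : (j : ℕ) ≤ a := Nat.lt_succ_iff.mp j.isLt
  have hcJJ : (JJ : ℕ) = (j : ℕ) := Fin.coe_castSucc j
  rw [invCount]
  set T := Finset.univ.filter
    (fun p : Fin (a + 2) × Fin (a + 2) => p.1 < p.2 ∧ w p.2 < w p.1) with hT
  rw [← Finset.card_filter_add_card_filter_not
    (s := T) (fun p : Fin (a + 2) × Fin (a + 2) => p.2 = LL)]
  rw [← Finset.card_filter_add_card_filter_not
    (s := T.filter (fun p => ¬ p.2 = LL)) (fun p : Fin (a + 2) × Fin (a + 2) => p.1 = JJ)]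
  have hC1 : (T.filter (fun p => p.2 = LL)).card = a + 1 - j := by
    have himg : T.filter (fun p => p.2 = LL)
        = (Finset.univ.filter (fun x : Fin (a + 2) => JJ < x)).image (fun x => (w x, LL)) := by
      ext p
      simp only [hT, Finset.mem_filter, Finset.mem_univ, true_and, Finset.mem_image]
      constructor
      · rintro ⟨⟨hp1, hp2⟩, hp3⟩
        refine ⟨w p.1, ?_, ?_⟩
        · rw [hp3, hwL] at hp2; exact hp2
        · rw [hww]; exact Prod.ext rfl hp3.symm
      · rintro ⟨x, hx, rfl⟩
        have hxLL : w x ≠ LL := by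
          intro h
          have : x = JJ := by rw [← hww x, h, hwL]
          rw [this] at hx; exact absurd hx (lt_irrefl _)
        exact ⟨⟨Fin.lt_last_iff_ne_last.mpr hxLL, by rw [hwL, hww]; exact hx⟩, rfl⟩
    rw [himg, Finset.card_image_of_injective _
      (fun x y h => w.injective (congrArg Prod.fst h))]
    have hIoi : Finset.univ.filter (fun x : Fin (a + 2) => JJ < x) = Finset.Ioi JJ := by
      ext x; simp [Finset.mem_Ioi]
    rw [hIoi, Fin.card_Ioi, hcJJ]
    omega
  have hC2 : ((T.filter (fun p => ¬ p.2 = LL)).filter (fun p => p.1 = JJ)).card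
      = a - j := by
    have himg : (T.filter (fun p => ¬ p.2 = LL)).filter (fun p => p.1 = JJ)
        = (Finset.univ.filter (fun x : Fin (a + 2) => JJ < x ∧ x ≠ LL)).image
            (fun x => (JJ, x)) := by
      ext p
      simp only [hT, Finset.mem_filter, Finset.mem_univ, true_and, Finset.mem_image]
      constructor
      · rintro ⟨⟨⟨hp1, hp2⟩, hp3⟩, hp4⟩
        exact ⟨p.2, ⟨hp4 ▸ hp1, hp3⟩, Prod.ext hp4.symm rfl⟩
      · rintro ⟨x, ⟨hx1, hx2⟩, rfl⟩
        have hxLL : w x ≠ LL := by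
          intro h
          have : x = JJ := by rw [← hww x, h, hwL]
          rw [this] at hx1; exact absurd hx1 (lt_irrefl _)
        exact ⟨⟨⟨hx1, by rw [hwJ]; exact Fin.lt_last_iff_ne_last.mpr hxLL⟩, hx2⟩, rfl⟩
    rw [himg, Finset.card_image_of_injective _
      (fun x y h => congrArg Prod.snd h)]
    have herase : Finset.univ.filter (fun x : Fin (a + 2) => JJ < x ∧ x ≠ LL)
        = (Finset.Ioi JJ).erase LL := by
      ext x
      simp only [Finset.mem_filter, Finset.mem_univ, true_and, Finset.mem_erase,
        Finset.mem_Ioi]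
      tauto
    rw [herase, Finset.card_erase_of_mem (Finset.mem_Ioi.mpr (Fin.castSucc_lt_last j)),
      Fin.card_Ioi, hcJJ]
    omega
  have hC3 : ((T.filter (fun p => ¬ p.2 = LL)).filter (fun p => ¬ p.1 = JJ)).card
      = invCount a u := by
    rw [← card_middle (embB j) (embB_strictMono j) w u (PhiB_emb j u)]
    congr 1
    ext p
    simp only [hT, Finset.mem_filter, Finset.mem_univ, true_and]
    constructor
    · rintro ⟨⟨⟨hp1, hp2⟩, hp3⟩, hp4⟩
      have hq : p.2 ≠ JJ := by
        intro h
        rw [h, hwJ] at hp2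
        exact absurd hp2 (Fin.not_lt.mpr (Fin.le_last _))
      exact ⟨⟨hp1, hp2⟩, (rangeB j p.1).mpr ⟨hp4, Fin.ne_last_of_lt hp1⟩,
        (rangeB j p.2).mpr ⟨hq, hp3⟩⟩
    · rintro ⟨⟨hp1, hp2⟩, hr1, hr2⟩
      exact ⟨⟨⟨hp1, hp2⟩, ((rangeB j p.2).mp hr2).2⟩, ((rangeB j p.1).mp hr1).1⟩
  rw [hC1, hC2, hC3]
  omega

noncomputable def resB (j : Fin (a + 1)) (v : Perm (Fin (a + 2)))
    (hJ : v j.castSucc = j.castSucc) (hL : v (Fin.last (a + 1)) = Fin.last (a + 1)) :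
    Perm (Fin a) :=
  ((eqvB j).symm).permCongr (v.subtypePerm (fun x => Iff.symm <|
    and_congr (not_congr ⟨fun h => h ▸ hJ, fun h => v.injective (by rw [hJ]; exact h)⟩)
      (not_congr ⟨fun h => h ▸ hL, fun h => v.injective (by rw [hL]; exact h)⟩)))

lemma extB_resB (j : Fin (a + 1)) (v : Perm (Fin (a + 2)))
    (hJ : v j.castSucc = j.castSucc) (hL : v (Fin.last (a + 1)) = Fin.last (a + 1)) :
    extB j (resB j v hJ hL) = v := by
  ext x
  by_cases hx : x ≠ j.castSucc ∧ x ≠ Fin.last (a + 1)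
  · rw [extB, Equiv.Perm.extendDomain_apply_subtype (resB j v hJ hL) (eqvB j) (by exact hx)]
    simp [resB, Equiv.permCongr_apply, Equiv.Perm.subtypePerm_apply]
  · rw [extB, Equiv.Perm.extendDomain_apply_not_subtype (resB j v hJ hL) (eqvB j) (by exact hx)]
    rcases not_and_or.mp hx with h | h
    · rw [not_not] at h; rw [h, hJ]
    · rw [not_not] at h; rw [h, hL]

lemma exists_PhiB (j : Fin (a + 1)) (w : Perm (Fin (a + 2))) (h1 : w * w = 1)
    (hl : w (Fin.last (a + 1)) = j.castSucc) : ∃ u, PhiB j u = w := by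
  have hww : ∀ x, w (w x) = x := fun x => by
    rw [← Equiv.Perm.mul_apply, h1, Equiv.Perm.one_apply]
  have hwJ : w j.castSucc = Fin.last (a + 1) := by rw [← hl, hww]
  set v := Equiv.swap j.castSucc (Fin.last (a + 1)) * w with hv
  have hJ : v j.castSucc = j.castSucc := by
    rw [hv, Equiv.Perm.mul_apply, hwJ, Equiv.swap_apply_right]
  have hL : v (Fin.last (a + 1)) = Fin.last (a + 1) := by
    rw [hv, Equiv.Perm.mul_apply, hl, Equiv.swap_apply_left]
  refine ⟨resB j v hJ hL, ?_⟩
  rw [PhiB, extB_resB, hv, ← mul_assoc, Equiv.swap_mul_self, one_mul]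

lemma sum_fiber_castSucc (a m' : ℕ) (j : Fin (a + 1)) :
    ∑ w ∈ (Finset.univ.filter
        (fun w : Perm (Fin (a + 2)) => w * w = 1 ∧ numTransA (a + 2) w = m' + 1)).filter
        (fun w => w (Fin.last (a + 1)) = j.castSucc),
      (Polynomial.X : Polynomial ℤ) ^ invCount (a + 2) w
    = (Polynomial.X : Polynomial ℤ) ^ (2 * (a - j) + 1) * LA a m' := by
  rw [LA, Finset.mul_sum]
  refine (Finset.sum_nbij (PhiB j) ?_ ?_ ?_ ?_).symm
  · intro u hu
    simp only [Finset.mem_filter, Finset.mem_univ, true_and] at hu ⊢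
    obtain ⟨h1, h2⟩ := hu
    exact ⟨⟨(PhiB_invol_iff j u).mpr h1, by rw [numTransA_PhiB, h2]⟩, PhiB_L j u⟩
  · intro u _ u' _ h
    exact PhiB_inj j h
  · intro w hw
    rw [Finset.mem_coe, Finset.mem_filter, Finset.mem_filter] at hw
    obtain ⟨⟨-, h1, h2⟩, hl⟩ := hw
    obtain ⟨u, hu⟩ := exists_PhiB j w h1 hl
    have hinv : u * u = 1 := (PhiB_invol_iff j u).mp (by rw [hu]; exact h1)
    have hnt : numTransA a u = m' := by
      have := numTransA_PhiB j u
      rw [hu, h2] at this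
      omega
    refine ⟨u, ?_, hu⟩
    rw [Finset.mem_coe, Finset.mem_filter]
    exact ⟨Finset.mem_univ u, hinv, hnt⟩
  · intro u hu
    simp only [Finset.mem_filter, Finset.mem_univ, true_and] at hu
    rw [invCount_PhiB j u hu.1]
    ring

end CaseB

set_option maxHeartbeats 1000000 in
lemma LA_rec (a m' : ℕ) :
    LA (a + 2) (m' + 1) = LA (a + 1) (m' + 1) +
      (∑ k ∈ Finset.range (a + 1), (Polynomial.X : Polynomial ℤ) ^ (2 * k + 1)) * LA a m' := by
  have hfib := Finset.sum_fiberwise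
    (Finset.univ.filter
      (fun w : Perm (Fin (a + 2)) => w * w = 1 ∧ numTransA (a + 2) w = m' + 1))
    (fun w => w (Fin.last (a + 1)))
    (fun w => (Polynomial.X : Polynomial ℤ) ^ invCount (a + 2) w)
  rw [LA, ← hfib, Fin.sum_univ_castSucc, add_comm (LA (a + 1) (m' + 1))]
  congr 1
  · rw [Finset.sum_congr rfl (fun (j : Fin (a + 1)) _ => sum_fiber_castSucc a m' j),
      ← Finset.sum_mul]
    congr 1
    rw [Fin.sum_univ_eq_sum_range (fun k => (Polynomial.X : Polynomial ℤ) ^ (2 * (a - k) + 1))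
        (a + 1),
      ← Finset.sum_range_reflect (fun k => (Polynomial.X : Polynomial ℤ) ^ (2 * k + 1)) (a + 1)]
    exact Finset.sum_congr rfl (fun k hk => by congr 1)
  · exact sum_fiber_last (a + 1) (m' + 1)

end InvolAux

theorem involution_length_polynomial_recursion_A :
    (∀ n : ℕ, 1 ≤ n → LA n 0 = 1) ∧
    LA 1 1 = 0 ∧
    LA 2 1 = Polynomial.X ∧
    (∀ n m : ℕ, 1 ≤ n → n < 2 * m → LA n m = 0) ∧
    (∀ n m : ℕ, 3 ≤ n → 1 ≤ m →
      LA n m = LA (n - 1) m +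
        (∑ k ∈ Finset.range (n - 1), (Polynomial.X : Polynomial ℤ) ^ (2 * k + 1)) *
          LA (n - 2) (m - 1)) := by
  refine ⟨fun n _ => InvolAux.LA_zero n, InvolAux.LA_small 1 1 (by norm_num), ?_,
    fun n m _ h => InvolAux.LA_small n m h, ?_⟩
  · have h := InvolAux.LA_rec 0 0
    rw [InvolAux.LA_small 1 1 (by norm_num), InvolAux.LA_zero 0] at h
    simpa using h
  · intro n m h3 h1
    obtain ⟨a, rfl⟩ : ∃ a, n = a + 2 := ⟨n - 2, by omega⟩
    obtain ⟨m', rfl⟩ : ∃ m', m = m' + 1 := ⟨m - 1, by omega⟩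
    have h := InvolAux.LA_rec a m'
    simpa using h
end

section
/- For n ≥ 1 let L_{W(A_n)}(t) = Σ_x t^{ℓ(x)} ∈ ℤ[t], the sum over all involutions x (including the identity) of Sym(n+1), where ℓ(x) is the number of inversions of x. Then L_{W(A_1)}(t) = 1 + t, L_{W(A_2)}(t) = 1 + 2t + t³, and for all n ≥ 3, L_{W(A_n)}(t) = L_{W(A_{n-1})}(t) + (t + t³ + ⋯ + t^{2n-1}) · L_{W(A_{n-2})}(t). -/
open Equiv Polynomial

open scoped Classical

/-- `L_{W(A_n)}(t)`: the involution length polynomial of `W(A_n) ≅ Sym(n+1)`, the sum of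
`t^{ℓ(x)}` over all involutions `x` (including the identity). -/
noncomputable def LAfull (n : ℕ) : Polynomial ℤ :=
  ∑ w ∈ Finset.univ.filter (fun w : Equiv.Perm (Fin (n + 1)) => w * w = 1),
    (Polynomial.X : Polynomial ℤ) ^ invCount (n + 1) w

open Finset

/-- count of inversion pairs lying inside the range of a strictly monotone `f` equals
`invCount` of the induced permutation. -/
lemma card_inRange {a b : ℕ} (f : Fin a → Fin b) (hf : StrictMono f)
    (e : Perm (Fin a)) (w : Perm (Fin b)) (hw : ∀ x, w (f x) = f (e x)) :
    ((univ : Finset (Fin b × Fin b)).filter fun q =>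
      ((∃ x, f x = q.1) ∧ (∃ x, f x = q.2)) ∧ q.1 < q.2 ∧ w q.2 < w q.1).card
      = invCount a e := by
  rw [invCount]
  refine (Finset.card_nbij (i := fun q : Fin a × Fin a => (f q.1, f q.2)) ?_ ?_ ?_).symm
  · intro q hq
    simp only [mem_coe, coe_filter, Set.mem_setOf_eq, mem_filter, mem_univ, true_and] at hq ⊢
    refine ⟨⟨⟨_, rfl⟩, ⟨_, rfl⟩⟩, hf hq.1, ?_⟩
    rw [hw, hw]
    exact hf hq.2
  · intro q hq q' hq' h
    simp only [Prod.mk.injEq] at h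
    exact Prod.ext (hf.injective h.1) (hf.injective h.2)
  · rintro ⟨q1, q2⟩ hq
    simp only [coe_filter, Set.mem_setOf_eq, mem_univ, true_and] at hq
    obtain ⟨⟨⟨x, hx⟩, ⟨y, hy⟩⟩, h1, h2⟩ := hq
    subst hx hy
    refine ⟨(x, y), ?_, rfl⟩
    simp only [coe_filter, Set.mem_setOf_eq, mem_univ, true_and]
    rw [hw, hw] at h2
    exact ⟨hf.lt_iff_lt.mp h1, hf.lt_iff_lt.mp h2⟩

lemma invCount_split {a b : ℕ} (f : Fin a → Fin b) (hf : StrictMono f)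
    (e : Perm (Fin a)) (w : Perm (Fin b)) (hw : ∀ x, w (f x) = f (e x)) :
    invCount b w = invCount a e +
      ((univ : Finset (Fin b × Fin b)).filter fun q =>
        ¬((∃ x, f x = q.1) ∧ (∃ x, f x = q.2)) ∧ q.1 < q.2 ∧ w q.2 < w q.1).card := by
  rw [invCount]
  have hsplit : (univ : Finset (Fin b × Fin b)).filter (fun q => q.1 < q.2 ∧ w q.2 < w q.1)
      = ((univ : Finset (Fin b × Fin b)).filter fun q =>
          ((∃ x, f x = q.1) ∧ (∃ x, f x = q.2)) ∧ q.1 < q.2 ∧ w q.2 < w q.1)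
        ∪ ((univ : Finset (Fin b × Fin b)).filter fun q =>
          ¬((∃ x, f x = q.1) ∧ (∃ x, f x = q.2)) ∧ q.1 < q.2 ∧ w q.2 < w q.1) := by
    ext q
    simp only [mem_union, mem_filter, mem_univ, true_and]
    tauto
  rw [hsplit, Finset.card_union_of_disjoint, card_inRange f hf e w hw]
  rw [Finset.disjoint_left]
  intro q hq hq'
  simp only [mem_filter, mem_univ, true_and] at hq hq'
  exact hq'.1 hq.1

lemma invCount_fix0 {n : ℕ} (e : Perm (Fin n)) (w : Perm (Fin (n + 1)))
    (hw0 : w 0 = 0) (hw : ∀ x, w x.succ = (e x).succ) :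
    invCount (n + 1) w = invCount n e := by
  have h := invCount_split (fun x : Fin n => x.succ) Fin.strictMono_succ e w hw
  rw [h]
  convert (add_zero _)
  rw [Finset.card_eq_zero, Finset.filter_eq_empty_iff]
  rintro ⟨q1, q2⟩ -
  simp only [not_and, not_lt]
  intro hr h12
  rcases Fin.eq_zero_or_eq_succ q1 with rfl | ⟨x, rfl⟩
  · rw [hw0]; exact Fin.zero_le _
  rcases Fin.eq_zero_or_eq_succ q2 with rfl | ⟨y, rfl⟩
  · exact absurd h12 (Fin.not_lt_zero _).elim
  · exact absurd ⟨y, rfl⟩ (hr ⟨x, rfl⟩)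

lemma range_f {n : ℕ} (p : Fin (n + 2)) (hp : p ≠ 0) (j : Fin (n + 2)) :
    (∃ x : Fin n, p.succAbove x.succ = j) ↔ (j ≠ 0 ∧ j ≠ p) := by
  constructor
  · rintro ⟨x, rfl⟩
    refine ⟨Fin.succAbove_ne_zero hp (Fin.succ_ne_zero x), Fin.succAbove_ne p x.succ⟩
  · rintro ⟨h0, hpj⟩
    obtain ⟨y, hy⟩ := Fin.exists_succAbove_eq (Ne.symm hpj).symm
    have hy0 : y ≠ 0 := by
      rintro rfl
      exact h0 (by rw [← hy, Fin.succAbove_ne_zero_zero hp])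
    obtain ⟨x, rfl⟩ := Fin.eq_succ_of_ne_zero hy0
    exact ⟨x, hy⟩

lemma rest_card {n : ℕ} (p : Fin (n + 2)) (hp : p ≠ 0) (w : Perm (Fin (n + 2)))
    (hw0 : w 0 = p) (hinv : ∀ x, w (w x) = x) :
    ((univ : Finset (Fin (n+2) × Fin (n+2))).filter fun q =>
      ¬((q.1 ≠ 0 ∧ q.1 ≠ p) ∧ (q.2 ≠ 0 ∧ q.2 ≠ p)) ∧ q.1 < q.2 ∧ w q.2 < w q.1).card
      = 2 * p.val - 1 := by
  have hwp : w p = 0 := by rw [← hw0, hinv]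
  have hwz : ∀ x, w x = 0 ↔ x = p := by
    intro x
    constructor
    · intro h; rw [← hinv x, h, ← hwp, hinv]
    · rintro rfl; exact hwp
  have hwpv : ∀ x, w x = p ↔ x = 0 := by
    intro x
    constructor
    · intro h; rw [← hinv x, h, hwp]
    · rintro rfl; exact hw0
  have hset : ((univ : Finset (Fin (n+2) × Fin (n+2))).filter fun q =>
      ¬((q.1 ≠ 0 ∧ q.1 ≠ p) ∧ (q.2 ≠ 0 ∧ q.2 ≠ p)) ∧ q.1 < q.2 ∧ w q.2 < w q.1)
      = ((Ioo (0 : Fin (n+2)) p).image fun k => ((0 : Fin (n+2)), w k))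
        ∪ ((Ioo (0 : Fin (n+2)) p).image fun i => (i, p))
        ∪ {((0 : Fin (n+2)), p)} := by
    ext ⟨q1, q2⟩
    simp only [mem_union, mem_image, mem_filter, mem_univ, true_and, mem_Ioo,
      mem_singleton, Prod.mk.injEq]
    constructor
    · rintro ⟨hne, hlt, hwlt⟩
      by_cases h1 : q1 = 0
      · subst h1
        by_cases h2 : q2 = p
        · subst h2; right; exact ⟨rfl, rfl⟩
        · left; left
          refine ⟨w q2, ⟨?_, ?_⟩, rfl, hinv q2⟩
          · rw [Fin.pos_iff_ne_zero]
            intro h; exact h2 ((hwz q2).mp h)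
          · rwa [hw0] at hwlt
      · -- q1 ≠ 0
        by_cases h1p : q1 = p
        · subst h1p
          rw [hwp] at hwlt
          exact absurd hwlt (Fin.not_lt_zero _)
        · have h2 : q2 = 0 ∨ q2 = p := by tauto
          rcases h2 with rfl | rfl
          · exact absurd hlt (Fin.not_lt_zero _)
          · left; right
            exact ⟨q1, ⟨Fin.pos_iff_ne_zero.mpr h1, hlt⟩, rfl, rfl⟩
    · rintro ((⟨k, ⟨hk0, hkp⟩, hq1, hq2⟩ | ⟨i, ⟨hi0, hip⟩, hq1, hq2⟩) | ⟨hq1, hq2⟩)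
      · subst hq1; subst hq2
        refine ⟨by simp, ?_, ?_⟩
        · rw [Fin.pos_iff_ne_zero]
          intro h
          rw [hwz k] at h
          subst h
          exact absurd hkp (lt_irrefl _)
        · rw [hw0, hinv]; exact hkp
      · subst hq1; subst hq2
        refine ⟨by simp, hip, ?_⟩
        rw [hwp, Fin.pos_iff_ne_zero]
        intro h
        rw [hwz i] at h
        subst h
        exact absurd hip (lt_irrefl _)
      · subst hq1; subst hq2
        exact ⟨by simp, Fin.pos_iff_ne_zero.mpr hp,
          by rw [hw0, hwp]; exact Fin.pos_iff_ne_zero.mpr hp⟩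
  rw [hset]
  have hd1 : Disjoint ((Ioo (0 : Fin (n+2)) p).image fun k => ((0 : Fin (n+2)), w k))
      ((Ioo (0 : Fin (n+2)) p).image fun i => (i, p)) := by
    rw [Finset.disjoint_left]
    rintro ⟨a, b⟩ h1 h2
    simp only [mem_image, mem_Ioo, Prod.mk.injEq] at h1 h2
    obtain ⟨k, ⟨hk0, _⟩, ha, _⟩ := h1
    obtain ⟨i, ⟨hi0, _⟩, hia, _⟩ := h2
    rw [← ha] at hia
    subst hia
    exact absurd hi0 (lt_irrefl _)
  have hd2 : Disjoint (((Ioo (0 : Fin (n+2)) p).image fun k => ((0 : Fin (n+2)), w k))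
      ∪ ((Ioo (0 : Fin (n+2)) p).image fun i => (i, p))) ({((0 : Fin (n+2)), p)} : Finset _) := by
    rw [Finset.disjoint_right]
    rintro ⟨a, b⟩ h1 h2
    simp only [mem_singleton, Prod.mk.injEq] at h1
    obtain ⟨rfl, rfl⟩ := h1
    simp only [mem_union, mem_image, mem_Ioo, Prod.mk.injEq] at h2
    rcases h2 with ⟨k, ⟨hk0, hkp⟩, _, hwk⟩ | ⟨i, ⟨hi0, _⟩, hi, _⟩
    · rw [hwpv] at hwk; subst hwk; exact absurd hk0 (lt_irrefl _)
    · subst hi; exact absurd hi0 (lt_irrefl _)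
  rw [Finset.card_union_of_disjoint hd2, Finset.card_union_of_disjoint hd1,
    Finset.card_singleton, Finset.card_image_of_injective _ (fun a b h => by
      simpa using w.injective (congrArg Prod.snd h)),
    Finset.card_image_of_injective _ (fun a b h => congrArg Prod.fst h),
    Fin.card_Ioo]
  have hp1 : 1 ≤ p.val := Nat.one_le_iff_ne_zero.mpr (fun h => hp (Fin.ext h))
  simp only [Fin.val_zero]
  omega

lemma invCount_nonfix {n : ℕ} (p : Fin (n + 2)) (hp : p ≠ 0)
    (e : Perm (Fin n)) (w : Perm (Fin (n + 2)))
    (hw0 : w 0 = p) (hinv : ∀ x, w (w x) = x)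
    (hw : ∀ x : Fin n, w (p.succAbove x.succ) = p.succAbove (e x).succ) :
    invCount (n + 2) w = invCount n e + (2 * p.val - 1) := by
  have hf : StrictMono (fun x : Fin n => p.succAbove x.succ) :=
    (Fin.strictMono_succAbove p).comp Fin.strictMono_succ
  rw [invCount_split (fun x : Fin n => p.succAbove x.succ) hf e w hw]
  congr 1
  rw [← rest_card p hp w hw0 hinv]
  congr 1
  apply Finset.filter_congr
  intro q _
  rw [range_f p hp q.1, range_f p hp q.2]

lemma inv_iff {n : ℕ} (w : Perm (Fin n)) : w * w = 1 ↔ ∀ x, w (w x) = x := by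
  rw [Equiv.ext_iff]
  simp [Equiv.Perm.mul_apply]

lemma exists_restrict {a b : ℕ} (f : Fin a → Fin b) (hfi : Function.Injective f)
    (w : Perm (Fin b)) (hstab : ∀ x : Fin b, x ∈ Set.range f ↔ w x ∈ Set.range f) :
    ∃ e : Perm (Fin a), ∀ x, f (e x) = w (f x) := by
  refine ⟨(Equiv.ofInjective f hfi).symm.permCongr (w.subtypePerm (fun x => (hstab x).symm)), fun x => ?_⟩
  rw [Equiv.permCongr_apply, Equiv.symm_symm, Equiv.ofInjective_apply,
    Equiv.Perm.subtypePerm_apply]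
  exact Equiv.apply_ofInjective_symm hfi _

noncomputable def S (n : ℕ) : Polynomial ℤ :=
  ∑ w ∈ Finset.univ.filter (fun w : Perm (Fin n) => w * w = 1),
    (Polynomial.X : Polynomial ℤ) ^ invCount n w

lemma fiber0 (n : ℕ) :
    ∑ w ∈ (Finset.univ.filter fun w : Perm (Fin (n + 1)) => w * w = 1).filter
        (fun w => w 0 = 0), (X : Polynomial ℤ) ^ invCount (n + 1) w = S n := by
  rw [S]
  symm
  have hfi : Function.Injective (Fin.succ : Fin n → Fin (n + 1)) := Fin.succ_injective n
  set femb : Fin n ↪ Fin (n + 1) := ⟨Fin.succ, hfi⟩ with hfemb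
  have hrange : ∀ j : Fin (n + 1), j ∈ Set.range (femb : Fin n → Fin (n + 1)) ↔ j ≠ 0 := by
    intro j
    simp [hfemb, Set.mem_range, Fin.exists_succ_eq]
  have hEsucc : ∀ (e : Perm (Fin n)) (x : Fin n),
      (e.viaFintypeEmbedding femb) x.succ = (e x).succ := by
    intro e x
    exact e.viaFintypeEmbedding_apply_image femb x
  have hE0 : ∀ e : Perm (Fin n), (e.viaFintypeEmbedding femb) 0 = 0 := by
    intro e
    apply Equiv.Perm.viaFintypeEmbedding_apply_notMem_range
    rw [hrange]
    simp
  refine Finset.sum_nbij (i := fun e : Perm (Fin n) => e.viaFintypeEmbedding femb)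
    ?_ ?_ ?_ ?_
  · intro e he
    simp only [mem_filter, mem_univ, true_and] at he ⊢
    rw [inv_iff] at he ⊢
    refine ⟨?_, hE0 e⟩
    intro x
    induction x using Fin.cases with
    | zero => rw [hE0, hE0]
    | succ y => rw [hEsucc, hEsucc, he]
  · intro e _ e' _ h
    ext x
    have := congrFun (congrArg (fun (σ : Perm (Fin (n+1))) => (σ : Fin (n+1) → Fin (n+1))) h) x.succ
    simp only [hEsucc] at this
    exact congrArg Fin.val (hfi this)
  · intro w hw
    simp only [coe_filter, Set.mem_setOf_eq, mem_filter, mem_univ, true_and] at hw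
    obtain ⟨hw1, hw0⟩ := hw
    rw [inv_iff] at hw1
    have hwz : ∀ x, w x = 0 ↔ x = 0 := by
      intro x
      constructor
      · intro h; rw [← hw1 x, h, hw0]
      · rintro rfl; exact hw0
    have hstab : ∀ x : Fin (n+1), x ∈ Set.range (femb : Fin n → Fin (n+1)) ↔
        w x ∈ Set.range (femb : Fin n → Fin (n+1)) := by
      intro x
      rw [hrange, hrange, not_iff_not.symm, not_ne_iff, not_ne_iff, hwz]
    obtain ⟨e, key⟩ := exists_restrict (femb : Fin n → Fin (n+1)) hfi w hstab
    have he : ∀ x, e (e x) = x := by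
      intro x
      apply hfi
      show (e (e x)).succ = x.succ
      have k1 := key (e x)
      have k2 := key x
      simp only [hfemb, Function.Embedding.coeFn_mk] at k1 k2
      rw [k1, k2, hw1]
    refine ⟨e, ?_, ?_⟩
    · simp only [coe_filter, Set.mem_setOf_eq, mem_univ, true_and, mem_coe, mem_filter]
      rw [inv_iff]
      exact he
    · ext x
      induction x using Fin.cases with
      | zero => rw [hE0 e, hw0]
      | succ y =>
        rw [hEsucc]
        have := key y
        simp only [hfemb, Function.Embedding.coeFn_mk] at this
        rw [this]
  · intro e he
    simp only [mem_filter, mem_univ, true_and] at he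
    rw [invCount_fix0 e (e.viaFintypeEmbedding femb) (hE0 e) (hEsucc e)]

lemma fiberp (n : ℕ) (p : Fin (n + 2)) (hp : p ≠ 0) :
    ∑ w ∈ (Finset.univ.filter fun w : Perm (Fin (n + 2)) => w * w = 1).filter
        (fun w => w 0 = p), (X : Polynomial ℤ) ^ invCount (n + 2) w
      = (X : Polynomial ℤ) ^ (2 * p.val - 1) * S n := by
  rw [S, Finset.mul_sum]
  symm
  have hf : StrictMono (fun x : Fin n => p.succAbove x.succ) :=
    (Fin.strictMono_succAbove p).comp Fin.strictMono_succ
  have hfi := hf.injective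
  set femb : Fin n ↪ Fin (n + 2) := ⟨fun x => p.succAbove x.succ, hfi⟩ with hfemb
  have hrange : ∀ j : Fin (n + 2), j ∈ Set.range (femb : Fin n → Fin (n + 2)) ↔
      (j ≠ 0 ∧ j ≠ p) := by
    intro j
    rw [← range_f p hp j]
    simp [hfemb, Set.mem_range]
  have hfne : ∀ x : Fin n, (femb x ≠ 0 ∧ femb x ≠ p) := fun x => (hrange _).mp ⟨x, rfl⟩
  have hEf : ∀ (e : Perm (Fin n)) (x : Fin n),
      (e.viaFintypeEmbedding femb) (femb x) = femb (e x) :=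
    fun e x => e.viaFintypeEmbedding_apply_image femb x
  have hE0 : ∀ e : Perm (Fin n), (e.viaFintypeEmbedding femb) 0 = 0 := fun e =>
    Equiv.Perm.viaFintypeEmbedding_apply_notMem_range _ _
      (by rw [hrange]; simp)
  have hEp : ∀ e : Perm (Fin n), (e.viaFintypeEmbedding femb) p = p := fun e =>
    Equiv.Perm.viaFintypeEmbedding_apply_notMem_range _ _
      (by rw [hrange]; simp)
  have hWf : ∀ (e : Perm (Fin n)) (x : Fin n),
      (Equiv.swap 0 p * e.viaFintypeEmbedding femb) (femb x) = femb (e x) := by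
    intro e x
    rw [Equiv.Perm.mul_apply, hEf,
      Equiv.swap_apply_of_ne_of_ne (hfne (e x)).1 (hfne (e x)).2]
  have hW0 : ∀ e : Perm (Fin n), (Equiv.swap 0 p * e.viaFintypeEmbedding femb) 0 = p := by
    intro e
    rw [Equiv.Perm.mul_apply, hE0, Equiv.swap_apply_left]
  have hWp : ∀ e : Perm (Fin n), (Equiv.swap 0 p * e.viaFintypeEmbedding femb) p = 0 := by
    intro e
    rw [Equiv.Perm.mul_apply, hEp, Equiv.swap_apply_right]
  have hWinv : ∀ e : Perm (Fin n), (∀ x, e (e x) = x) →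
      ∀ x, (Equiv.swap 0 p * e.viaFintypeEmbedding femb)
        ((Equiv.swap 0 p * e.viaFintypeEmbedding femb) x) = x := by
    intro e he x
    by_cases h0 : x = 0
    · subst h0; rw [hW0, hWp]
    by_cases hpp : x = p
    · subst hpp; rw [hWp, hW0]
    obtain ⟨y, rfl⟩ := (hrange x).mpr ⟨h0, hpp⟩
    rw [hWf, hWf, he]
  refine Finset.sum_nbij
    (i := fun e : Perm (Fin n) => Equiv.swap 0 p * e.viaFintypeEmbedding femb) ?_ ?_ ?_ ?_
  · intro e he
    simp only [mem_filter, mem_univ, true_and] at he ⊢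
    rw [inv_iff] at he ⊢
    exact ⟨hWinv e he, hW0 e⟩
  · intro e _ e' _ h
    ext x
    have := congrFun (congrArg (fun (σ : Perm (Fin (n + 2))) => (σ : Fin (n+2) → Fin (n+2))) h)
      (femb x)
    simp only [hWf] at this
    exact congrArg Fin.val (hfi this)
  · intro w hw
    simp only [coe_filter, Set.mem_setOf_eq, mem_filter, mem_univ, true_and] at hw
    obtain ⟨hw1, hw0⟩ := hw
    rw [inv_iff] at hw1
    have hwp : w p = 0 := by rw [← hw0, hw1]
    have hwz : ∀ x, w x = 0 ↔ x = p := by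
      intro x
      constructor
      · intro h; rw [← hw1 x, h, ← hwp, hw1]
      · rintro rfl; exact hwp
    have hwpv : ∀ x, w x = p ↔ x = 0 := by
      intro x
      constructor
      · intro h; rw [← hw1 x, h, hwp]
      · rintro rfl; exact hw0
    have hstab : ∀ x : Fin (n + 2), x ∈ Set.range (femb : Fin n → Fin (n + 2)) ↔
        w x ∈ Set.range (femb : Fin n → Fin (n + 2)) := by
      intro x
      rw [hrange, hrange]
      constructor
      · rintro ⟨h0, hpx⟩
        refine ⟨fun h => hpx ((hwz x).mp h), fun h => h0 ((hwpv x).mp h)⟩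
      · rintro ⟨h0, hpx⟩
        refine ⟨fun h => hpx (by rw [h, hw0]), fun h => h0 (by rw [h, hwp])⟩
    obtain ⟨e, key⟩ := exists_restrict (femb : Fin n → Fin (n + 2)) hfi w hstab
    have he : ∀ x, e (e x) = x := by
      intro x
      apply hfi
      show femb (e (e x)) = femb x
      rw [key (e x), key x, hw1]
    refine ⟨e, ?_, ?_⟩
    · simp only [coe_filter, Set.mem_setOf_eq, mem_univ, true_and, mem_coe, mem_filter]
      rw [inv_iff]
      exact he
    · ext x
      apply congrArg Fin.val
      by_cases h0 : x = 0
      · subst h0; rw [hW0, hw0]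
      by_cases hpp : x = p
      · subst hpp; rw [hWp, hwp]
      obtain ⟨y, rfl⟩ := (hrange x).mpr ⟨h0, hpp⟩
      rw [hWf, key]
  · intro e he
    simp only [mem_filter, mem_univ, true_and] at he
    rw [inv_iff] at he
    have := invCount_nonfix p hp e (Equiv.swap 0 p * e.viaFintypeEmbedding femb)
      (hW0 e) (hWinv e he) (fun x => hWf e x)
    rw [this, pow_add, mul_comm]

lemma mainS (n : ℕ) : S (n + 2) = S (n + 1) +
    (∑ k ∈ Finset.range (n + 1), (X : Polynomial ℤ) ^ (2 * k + 1)) * S n := by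
  conv_lhs => rw [S]
  rw [← Finset.sum_fiberwise (Finset.univ.filter fun w : Perm (Fin (n + 2)) => w * w = 1)
    (fun w => w 0) (fun w => (X : Polynomial ℤ) ^ invCount (n + 2) w)]
  rw [Fin.sum_univ_succ]
  congr 1
  · exact fiber0 (n + 1)
  · rw [Finset.sum_mul,
      ← Fin.sum_univ_eq_sum_range (fun k => (X : Polynomial ℤ) ^ (2 * k + 1) * S n) (n + 1)]
    apply Finset.sum_congr rfl
    intro j _
    rw [fiberp n j.succ (Fin.succ_ne_zero j)]
    have h : 2 * (Fin.succ j : Fin (n + 2)).val - 1 = 2 * (j : ℕ) + 1 := by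
      rw [Fin.val_succ]; omega
    rw [h]

lemma S_triv (n : ℕ) (h : ∀ w : Perm (Fin n), w = 1) : S n = 1 := by
  rw [S]
  have h1 : (Finset.univ.filter fun w : Perm (Fin n) => w * w = 1) = {1} := by
    ext w
    simp [h w]
  rw [h1, Finset.sum_singleton]
  have h2 : invCount n 1 = 0 := by
    rw [invCount, Finset.card_eq_zero, Finset.filter_eq_empty_iff]
    rintro ⟨a, b⟩ -
    intro hcon
    simp only [Equiv.Perm.one_apply] at hcon
    exact absurd hcon.2 (not_lt.mpr hcon.1.le)
  rw [h2, pow_zero]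

lemma S_zero : S 0 = 1 := S_triv 0 (fun w => by ext x; exact x.elim0)

lemma S_one : S 1 = 1 := S_triv 1 (fun w => by
  have : ∀ y : Fin 1, y = 0 := fun y => Fin.ext (by omega)
  refine Equiv.ext fun x => ?_
  rw [this (w x), this ((1 : Perm (Fin 1)) x)])

lemma LAfull_eq (n : ℕ) : LAfull n = S (n + 1) := rfl

lemma LA1 : LAfull 1 = 1 + Polynomial.X := by
  rw [LAfull_eq, mainS 0, S_one, S_zero, Finset.sum_range_one]
  ring

theorem involution_length_polynomial_A_full :
    LAfull 1 = 1 + Polynomial.X ∧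
    LAfull 2 = 1 + 2 * Polynomial.X + Polynomial.X ^ 3 ∧
    (∀ n : ℕ, 3 ≤ n →
      LAfull n = LAfull (n - 1) +
        (∑ k ∈ Finset.range n, (Polynomial.X : Polynomial ℤ) ^ (2 * k + 1)) *
          LAfull (n - 2)) := by
  refine ⟨LA1, ?_, ?_⟩
  · rw [LAfull_eq, mainS 1, ← LAfull_eq, LA1, S_one, Finset.sum_range_succ,
      Finset.sum_range_one]
    ring
  · intro n hn
    obtain ⟨m, rfl⟩ : ∃ m, n = m + 3 := ⟨n - 3, by omega⟩
    have h1 : m + 3 - 1 = m + 2 := by omega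
    have h2 : m + 3 - 2 = m + 1 := by omega
    rw [h1, h2, LAfull_eq, LAfull_eq, LAfull_eq]
    exact mainS (m + 2)
end

section
/- Let n ≥ 2 be even and let X be the set of involutions x ∈ Sym(n) with no fixed points (i.e. x(i) ≠ i for all i ∈ {1,…,n}). Then Σ_{x∈X} t^{ℓ(x)} = t^{n/2} · Π_{k=1}^{n/2} (1 + t² + t⁴ + ⋯ + t^{4k-4}), where ℓ(x) is the number of inversions of x. -/
open Equiv Polynomial

open scoped Classical

namespace FPFaux
variable {N : ℕ}
def emb (j : Fin (N+1)) (i : Fin N) : Fin (N+2) := (j.succAbove i).castSucc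
lemma emb_strictMono (j : Fin (N+1)) : StrictMono (emb j) :=
  fun _ _ h => Fin.castSucc_lt_castSucc_iff.mpr ((Fin.strictMono_succAbove j) h)
lemma emb_injective (j : Fin (N+1)) : Function.Injective (emb j) :=
  (emb_strictMono j).injective
lemma emb_ne_castSucc (j : Fin (N+1)) (i : Fin N) : emb j i ≠ j.castSucc := by
  intro h; exact Fin.succAbove_ne j i (Fin.castSucc_injective _ h)
lemma emb_ne_last (j : Fin (N+1)) (i : Fin N) : emb j i ≠ Fin.last (N+1) :=
  (Fin.castSucc_lt_last _).ne
lemma mem_range_emb {j : Fin (N+1)} {b : Fin (N+2)} (h1 : b ≠ j.castSucc)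
    (h2 : b ≠ Fin.last (N+1)) : ∃ i, emb j i = b := by
  obtain ⟨c, rfl⟩ : ∃ c : Fin (N+1), c.castSucc = b :=
    ⟨b.castPred h2, Fin.castSucc_castPred _ _⟩
  obtain ⟨i, hi⟩ := Fin.exists_succAbove_eq (show c ≠ j from fun h => h1 (by rw [h]))
  exact ⟨i, by rw [emb, hi]⟩
noncomputable def F (j : Fin (N+1)) (x' : Perm (Fin N)) : Perm (Fin (N+2)) :=
  Equiv.swap j.castSucc (Fin.last (N+1)) * x'.viaFintypeEmbedding ⟨emb j, emb_injective j⟩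
lemma F_apply_last (j : Fin (N+1)) (x' : Perm (Fin N)) :
    F j x' (Fin.last (N+1)) = j.castSucc := by
  have h : (Fin.last (N+1)) ∉ Set.range (⟨emb j, emb_injective j⟩ : Fin N ↪ Fin (N+2)) := by
    rintro ⟨i, hi⟩; exact emb_ne_last j i hi
  rw [F, Perm.mul_apply, Equiv.Perm.viaFintypeEmbedding_apply_notMem_range _ _ h,
    Equiv.swap_apply_right]
lemma F_apply_castSucc (j : Fin (N+1)) (x' : Perm (Fin N)) :
    F j x' j.castSucc = Fin.last (N+1) := by
  have h : (j.castSucc) ∉ Set.range (⟨emb j, emb_injective j⟩ : Fin N ↪ Fin (N+2)) := by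
    rintro ⟨i, hi⟩; exact emb_ne_castSucc j i hi
  rw [F, Perm.mul_apply, Equiv.Perm.viaFintypeEmbedding_apply_notMem_range _ _ h,
    Equiv.swap_apply_left]
lemma F_apply_emb (j : Fin (N+1)) (x' : Perm (Fin N)) (i : Fin N) :
    F j x' (emb j i) = emb j (x' i) := by
  have h := Equiv.Perm.viaFintypeEmbedding_apply_image x' (⟨emb j, emb_injective j⟩ : Fin N ↪ Fin (N+2)) i
  rw [F, Perm.mul_apply]
  simp only [Function.Embedding.coeFn_mk] at h
  rw [h, Equiv.swap_apply_of_ne_of_ne (emb_ne_castSucc j _) (emb_ne_last j _)]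

lemma invCount_F (j : Fin (N+1)) (x' : Perm (Fin N)) :
    invCount (N+2) (F j x') = invCount N x' + (2*N+1 - 2*j.val) := by
  set w := F j x' with hw
  set L := Fin.last (N+1) with hL
  set cj := j.castSucc with hcj
  set s := (Finset.univ.filter fun p : Fin (N+2) × Fin (N+2) => p.1 < p.2 ∧ w p.2 < w p.1)
    with hs
  -- split off pairs with second coordinate = L
  have hsplit1 : (s.filter fun p => p.2 = L).card
      + (s.filter fun p => ¬ p.2 = L).card = s.card :=
    Finset.card_filter_add_card_filter_not _
  have hsplit2 : ((s.filter fun p => ¬ p.2 = L).filter fun p => p.1 = cj).card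
      + ((s.filter fun p => ¬ p.2 = L).filter fun p => ¬ p.1 = cj).card
      = (s.filter fun p => ¬ p.2 = L).card :=
    Finset.card_filter_add_card_filter_not _
  -- B : second coordinate = L
  have hB : (s.filter fun p => p.2 = L).card = N + 1 - j.val := by
    have himg : (s.filter fun p => p.2 = L)
        = (Finset.univ.filter fun a : Fin (N+2) => cj < w a).image (fun a => (a, L)) := by
      ext p
      simp only [Finset.mem_filter, Finset.mem_image, Finset.mem_univ, true_and, hs]
      constructor
      · rintro ⟨⟨h1, h2⟩, h3⟩
        refine ⟨p.1, ?_, ?_⟩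
        · rw [h3, F_apply_last] at h2; exact h2
        · rw [← h3]
      · rintro ⟨a, ha, rfl⟩
        refine ⟨⟨?_, ?_⟩, rfl⟩
        · simp only []
          refine lt_of_le_of_ne (Fin.le_last a) fun h => ?_
          rw [h, F_apply_last] at ha
          exact absurd ha (lt_irrefl _)
        · show F j x' (Fin.last (N+1)) < F j x' a
          rw [F_apply_last]; exact ha
    rw [himg, Finset.card_image_of_injective _ (fun a b h => (Prod.mk.injEq _ _ _ _ ▸ h).1)]
    · -- card of preimage under w
      have : (Finset.univ.filter fun a : Fin (N+2) => cj < w a).card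
          = (Finset.univ.filter fun v : Fin (N+2) => cj < v).card := by
        apply Finset.card_nbij' (i := fun a => w a) (j := fun v => w.symm v)
        · intro a ha; simp only [Finset.mem_coe, Finset.mem_filter, Finset.mem_univ, true_and] at *; exact ha
        · intro v hv; simp only [Finset.mem_coe, Finset.mem_filter, Finset.mem_univ, true_and] at *
          simpa using hv
        · intro a _; simp
        · intro v _; simp
      rw [this]
      have : (Finset.univ.filter fun v : Fin (N+2) => cj < v) = Finset.Ioi cj := by
        ext v; simp
      rw [this, Fin.card_Ioi]
      simp [hcj]
  -- C : second ≠ L, first = cj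
  have hC : ((s.filter fun p => ¬ p.2 = L).filter fun p => p.1 = cj).card = N - j.val := by
    have himg : ((s.filter fun p => ¬ p.2 = L).filter fun p => p.1 = cj)
        = (Finset.Ioo cj L).image (fun b => (cj, b)) := by
      ext p
      simp only [Finset.mem_filter, Finset.mem_image, Finset.mem_univ, true_and,
        Finset.mem_Ioo, hs]
      constructor
      · rintro ⟨⟨⟨h1, h2⟩, h3⟩, h4⟩
        exact ⟨p.2, ⟨h4 ▸ h1, lt_of_le_of_ne (Fin.le_last _) h3⟩, by rw [← h4]⟩
      · rintro ⟨b, ⟨hb1, hb2⟩, rfl⟩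
        refine ⟨⟨⟨hb1, ?_⟩, hb2.ne⟩, rfl⟩
        show F j x' b < F j x' j.castSucc
        rw [F_apply_castSucc]
        refine lt_of_le_of_ne (Fin.le_last _) fun h => ?_
        have : b = cj := by
          apply w.injective
          rw [h, F_apply_castSucc]
        exact absurd (this ▸ hb1) (lt_irrefl _)
    rw [himg, Finset.card_image_of_injective _ (fun a b h => (Prod.mk.injEq _ _ _ _ ▸ h).2)]
    rw [Fin.card_Ioo]
    have hjN : j.val ≤ N := Nat.lt_succ_iff.mp j.isLt
    simp only [hcj, hL, Fin.coe_castSucc, Fin.val_last]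
    omega
  -- A : the rest, bijective with inversions of x'
  have hA : ((s.filter fun p => ¬ p.2 = L).filter fun p => ¬ p.1 = cj).card
      = invCount N x' := by
    rw [invCount]
    symm
    apply Finset.card_bij (i := fun (p : Fin N × Fin N) _ => (emb j p.1, emb j p.2))
    · intro p hp
      simp only [Finset.mem_filter, Finset.mem_univ, true_and, hs] at *
      obtain ⟨h1, h2⟩ := hp
      refine ⟨⟨⟨emb_strictMono j h1, ?_⟩, emb_ne_last j _⟩, emb_ne_castSucc j _⟩
      show F j x' (emb j p.2) < F j x' (emb j p.1)
      rw [F_apply_emb, F_apply_emb]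
      exact emb_strictMono j h2
    · intro a _ b _ h
      have h1 := (Prod.mk.injEq _ _ _ _ ▸ h).1
      have h2 := (Prod.mk.injEq _ _ _ _ ▸ h).2
      exact Prod.ext (emb_injective j h1) (emb_injective j h2)
    · intro p hp
      simp only [Finset.mem_filter, Finset.mem_univ, true_and, hs] at hp
      obtain ⟨⟨⟨h1, h2⟩, h3⟩, h4⟩ := hp
      have hp1L : p.1 ≠ L := (lt_of_lt_of_le h1 (Fin.le_last _)).ne
      have hp2cj : p.2 ≠ cj := by
        intro h
        rw [h, F_apply_castSucc] at h2
        exact absurd (lt_of_lt_of_le h2 (Fin.le_last _)) (lt_irrefl _)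
      obtain ⟨i1, hi1⟩ := mem_range_emb h4 hp1L
      obtain ⟨i2, hi2⟩ := mem_range_emb hp2cj h3
      refine ⟨(i1, i2), ?_, ?_⟩
      · simp only [Finset.mem_filter, Finset.mem_univ, true_and]
        constructor
        · exact (emb_strictMono j).lt_iff_lt.mp (by rw [hi1, hi2]; exact h1)
        · apply (emb_strictMono j).lt_iff_lt.mp
          rw [← F_apply_emb j x', ← F_apply_emb j x', hi1, hi2]
          exact h2
      · rw [hi1, hi2]
  have hjN : j.val ≤ N := Nat.lt_succ_iff.mp j.isLt
  have : invCount (N+2) w = s.card := rfl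
  omega


lemma cases_fin (j : Fin (N+1)) (b : Fin (N+2)) :
    b = j.castSucc ∨ b = Fin.last (N+1) ∨ ∃ i, emb j i = b := by
  by_cases h1 : b = j.castSucc
  · exact Or.inl h1
  by_cases h2 : b = Fin.last (N+1)
  · exact Or.inr (Or.inl h2)
  exact Or.inr (Or.inr (mem_range_emb h1 h2))

lemma F_mul_F {j : Fin (N+1)} {x' : Perm (Fin N)} (hx' : x' * x' = 1) :
    F j x' * F j x' = 1 := by
  have hxx : ∀ i, x' (x' i) = i := fun i => by
    rw [← Perm.mul_apply, hx', Perm.one_apply]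
  ext b
  rcases cases_fin j b with rfl | rfl | ⟨i, rfl⟩
  · rw [Perm.mul_apply, F_apply_castSucc, F_apply_last, Perm.one_apply]
  · rw [Perm.mul_apply, F_apply_last, F_apply_castSucc, Perm.one_apply]
  · rw [Perm.mul_apply, F_apply_emb, F_apply_emb, hxx, Perm.one_apply]

lemma F_fpf {j : Fin (N+1)} {x' : Perm (Fin N)} (hx' : ∀ i, x' i ≠ i) :
    ∀ b, F j x' b ≠ b := by
  intro b
  rcases cases_fin j b with rfl | rfl | ⟨i, rfl⟩
  · rw [F_apply_castSucc]; exact (Fin.castSucc_lt_last j).ne'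
  · rw [F_apply_last]; exact (Fin.castSucc_lt_last j).ne
  · rw [F_apply_emb]; exact fun h => hx' i (emb_injective j h)

lemma F_injective {j j' : Fin (N+1)} {a b : Perm (Fin N)} (h : F j a = F j' b) :
    j = j' ∧ a = b := by
  have hj : j.castSucc = j'.castSucc := by
    rw [← F_apply_last j a, h, F_apply_last]
  have hjj : j = j' := Fin.castSucc_injective _ hj
  subst hjj
  refine ⟨rfl, Equiv.ext fun i => emb_injective j ?_⟩
  rw [← F_apply_emb j a, h, F_apply_emb]

noncomputable def compEquiv (j : Fin (N+1)) :
    Fin N ≃ {b : Fin (N+2) // b ≠ j.castSucc ∧ b ≠ Fin.last (N+1)} :=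
  Equiv.ofBijective (fun i => ⟨emb j i, emb_ne_castSucc j i, emb_ne_last j i⟩)
    ⟨fun a b h => emb_injective j (congrArg Subtype.val h),
     fun b => by obtain ⟨i, hi⟩ := mem_range_emb b.2.1 b.2.2; exact ⟨i, Subtype.ext hi⟩⟩

lemma F_surjective {x : Perm (Fin (N+2))} (hinv : x * x = 1) (hfpf : ∀ b, x b ≠ b) :
    ∃ (j : Fin (N+1)) (x' : Perm (Fin N)),
      (x' * x' = 1 ∧ ∀ i, x' i ≠ i) ∧ F j x' = x := by
  have hxx : ∀ b, x (x b) = b := fun b => by rw [← Perm.mul_apply, hinv, Perm.one_apply]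
  have hxL : x (Fin.last (N+1)) ≠ Fin.last (N+1) := hfpf _
  set j : Fin (N+1) := (x (Fin.last (N+1))).castPred hxL with hj
  have hjc : j.castSucc = x (Fin.last (N+1)) := Fin.castSucc_castPred _ _
  have hpres : ∀ b : Fin (N+2),
      (b ≠ j.castSucc ∧ b ≠ Fin.last (N+1)) ↔
      (x b ≠ j.castSucc ∧ x b ≠ Fin.last (N+1)) := by
    intro b
    rw [hjc]
    constructor
    · rintro ⟨h1, h2⟩
      exact ⟨fun h => h2 (x.injective h), fun h => h1 (by rw [← hxx b, h])⟩
    · rintro ⟨h1, h2⟩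
      exact ⟨fun h => h2 (by rw [h, hxx]), fun h => h1 (by rw [h])⟩
  set E := compEquiv j with hE
  set x' : Perm (Fin N) := (E.trans (x.subtypePerm (fun b => (hpres b).symm))).trans E.symm with hx'
  have key : ∀ i, emb j (x' i) = x (emb j i) := by
    intro i
    show emb j (E.symm (x.subtypePerm (fun b => (hpres b).symm) (E i))) = _
    have h1 : ∀ b : {b : Fin (N+2) // b ≠ j.castSucc ∧ b ≠ Fin.last (N+1)},
        emb j (E.symm b) = b.val := fun b => congrArg Subtype.val (E.apply_symm_apply b)
    rw [h1]
    rfl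
  have hinv' : x' * x' = 1 := by
    refine Equiv.ext fun i => emb_injective j ?_
    rw [Perm.mul_apply, key, key, hxx, Perm.one_apply]
  have hfpf' : ∀ i, x' i ≠ i := fun i h => hfpf (emb j i) (by rw [← key, h])
  refine ⟨j, x', ⟨hinv', hfpf'⟩, ?_⟩
  ext b
  rcases cases_fin j b with rfl | rfl | ⟨i, rfl⟩
  · rw [F_apply_castSucc, hjc, hxx]
  · rw [F_apply_last, hjc]
  · rw [F_apply_emb, key]

lemma step (N : ℕ) :
    (∑ x ∈ Finset.univ.filter (fun x : Perm (Fin (N+2)) => x * x = 1 ∧ ∀ i, x i ≠ i),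
      (X : Polynomial ℤ) ^ invCount (N+2) x)
    = (∑ j : Fin (N+1), (X : Polynomial ℤ) ^ (2*N+1 - 2*j.val)) *
      (∑ x' ∈ Finset.univ.filter (fun x' : Perm (Fin N) => x' * x' = 1 ∧ ∀ i, x' i ≠ i),
        (X : Polynomial ℤ) ^ invCount N x') := by
  rw [Finset.sum_mul_sum, ← Finset.sum_product']
  symm
  apply Finset.sum_bij (i := fun (p : Fin (N+1) × Perm (Fin N)) _ => F p.1 p.2)
  · intro p hp
    rw [Finset.mem_product, Finset.mem_filter] at hp
    rw [Finset.mem_filter]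
    exact ⟨Finset.mem_univ _, F_mul_F hp.2.2.1, F_fpf hp.2.2.2⟩
  · intro a _ b _ h
    obtain ⟨h1, h2⟩ := F_injective h
    exact Prod.ext h1 h2
  · intro x hx
    rw [Finset.mem_filter] at hx
    obtain ⟨j, x', hmem, hFx⟩ := F_surjective hx.2.1 hx.2.2
    refine ⟨(j, x'), ?_, hFx⟩
    rw [Finset.mem_product, Finset.mem_filter]
    exact ⟨Finset.mem_univ _, Finset.mem_univ _, hmem⟩
  · intro p _
    rw [invCount_F, pow_add, mul_comm]


lemma main (m : ℕ) (n : ℕ) (hn : n = 2 * m) :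
    (∑ x ∈ Finset.univ.filter
        (fun x : Equiv.Perm (Fin n) => x * x = 1 ∧ ∀ i, x i ≠ i),
      (Polynomial.X : Polynomial ℤ) ^ invCount n x) =
    Polynomial.X ^ (n / 2) *
      ∏ k ∈ Finset.Icc 1 (n / 2),
        ∑ j ∈ Finset.range (2 * k - 1), (Polynomial.X : Polynomial ℤ) ^ (2 * j) := by
  induction m generalizing n with
  | zero =>
    subst hn
    have hfilt : (Finset.univ.filter
        (fun x : Perm (Fin (2*0)) => x * x = 1 ∧ ∀ i, x i ≠ i)) = Finset.univ := by
      apply Finset.filter_true_of_mem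
      intro x _
      refine ⟨?_, fun i => i.elim0⟩
      exact Equiv.ext fun i => i.elim0
    have hic : ∀ x : Perm (Fin (2*0)), invCount (2*0) x = 0 := by
      intro x
      have : (Finset.univ : Finset (Fin (2*0) × Fin (2*0))).card = 0 := by simp
      exact Nat.le_zero.mp (le_trans (Finset.card_filter_le _ _) (le_of_eq this))
    rw [hfilt]
    rw [Finset.sum_congr rfl (fun x _ => by rw [hic x, pow_zero])]
    simp [Fintype.card_perm]
  | succ m ih =>
    subst hn
    have hih := ih (2*m) rfl
    rw [show (2*m)/2 = m by omega] at hih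
    rw [show (2*(m+1))/2 = m+1 by omega]
    show (∑ x ∈ Finset.univ.filter
        (fun x : Equiv.Perm (Fin (2*m+2)) => x * x = 1 ∧ ∀ i, x i ≠ i),
      (Polynomial.X : Polynomial ℤ) ^ invCount (2*m+2) x) = _
    rw [step (2*m), hih]
    have hsum : (∑ j : Fin (2*m+1), (X : Polynomial ℤ) ^ (2*(2*m)+1 - 2*j.val))
        = X * ∑ i ∈ Finset.range (2*m+1), (X : Polynomial ℤ)^(2*i) := by
      rw [Fin.sum_univ_eq_sum_range (fun i => (X : Polynomial ℤ) ^ (2*(2*m)+1 - 2*i))]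
      rw [← Finset.sum_range_reflect (fun i => (X : Polynomial ℤ)^(2*(2*m)+1-2*i)) (2*m+1)]
      rw [Finset.mul_sum]
      refine Finset.sum_congr rfl fun i hi => ?_
      rw [Finset.mem_range] at hi
      rw [← pow_succ']
      congr 1
      omega
    rw [hsum]
    rw [Finset.prod_Icc_succ_top (Nat.le_add_left 1 m)]
    rw [show 2*(m+1)-1 = 2*m+1 from rfl]
    ring

end FPFaux


/-- Length polynomial of the fixed-point-free involutions of `Sym(n)` for even `n`. -/
theorem fpf_involution_length_polynomial_A (n : ℕ) (hn : 2 ≤ n) (hev : Even n) :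
    (∑ x ∈ Finset.univ.filter
        (fun x : Equiv.Perm (Fin n) => x * x = 1 ∧ ∀ i, x i ≠ i),
      (Polynomial.X : Polynomial ℤ) ^ invCount n x) =
    Polynomial.X ^ (n / 2) *
      ∏ k ∈ Finset.Icc 1 (n / 2),
        ∑ j ∈ Finset.range (2 * k - 1), (Polynomial.X : Polynomial ℤ) ^ (2 * j) := by
  obtain ⟨r, rfl⟩ := hev
  exact FPFaux.main r (r + r) (two_mul r).symm
end
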